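/- arXiv:math/0603466 — 5 statements merged into one kernel-verified Lean document; each statement's English description precedes it below -/
import Mathlib

section
/- (Reduction-uniqueness, Theorem 3.) The reduction system (SR) is reduction-unique: for all biwords β₁, β₂, β₃ one has [β₁β₂β₃]_{SR} = [β₁·[β₂]_{SR}·β₃]_{SR}, where the outer leftmost reduction is extended by linearity over the expression [β₂]_{SR} placed in the middle. -/
/-!
Common framework: fix a positive integer `r`; the alphabet `A = {1,…,r}` is modelled
by `Fin r` (the letter `k ∈ A` corresponding to `⟨k-1, _⟩ : Fin r`, with the same
linear order).  A biword is a word in the free monoid on biletters (columns);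
`MonoidAlgebra R (Biword r)` is the corresponding large algebra restricted to
finitely supported linear combinations of biwords.
-/

open LaurentPolynomial

noncomputable section

/-- A biletter: a column `(x over a)` with top letter `x` and bottom letter `a`. -/
abbrev Biletter (r : ℕ) := Fin r × Fin r

/-- A biword: a word of biletters; biwords form the free monoid on biletters,
with identity the empty biword. -/
abbrev Biword (r : ℕ) := FreeMonoid (Biletter r)

/-- The biword with the given list of columns. -/
def ofCols {r : ℕ} (l : List (Biletter r)) : Biword r := FreeMonoid.ofList l

/-- The biword with the given top word and bottom word. -/
def mkBW {r : ℕ} (top bot : List (Fin r)) : Biword r := FreeMonoid.ofList (top.zip bot)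

/-- Number of inversions of a word: the number of pairs `i < j` with `w i > w j`. -/
def wordInv {r : ℕ} : List (Fin r) → ℕ
  | [] => 0
  | a :: l => l.countP (fun b => decide (b < a)) + wordInv l

/-- The non-decreasing rearrangement `w̄` of a word `w`. -/
def sortWord {r : ℕ} (w : List (Fin r)) : List (Fin r) := List.insertionSort (· ≤ ·) w

/-- Top word of a biword. -/
def topWord {r : ℕ} (α : Biword r) : List (Fin r) := (FreeMonoid.toList α).map Prod.fst

/-- Bottom word of a biword. -/
def botWord {r : ℕ} (α : Biword r) : List (Fin r) := (FreeMonoid.toList α).map Prod.snd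

/-- Number of exceedances of a biword: the number of columns whose top letter
strictly exceeds its bottom letter. -/
def excBW {r : ℕ} (α : Biword r) : ℕ :=
  (FreeMonoid.toList α).countP (fun p => decide (p.2 < p.1))

/-- `inv⁻` of a biword: inversions of the bottom word minus inversions of the top word. -/
def invMinus {r : ℕ} (α : Biword r) : ℤ :=
  (wordInv (botWord α) : ℤ) - (wordInv (topWord α) : ℤ)

/-- A circuit: a biword whose top word is a rearrangement of its bottom word. -/
def IsCircuit {r : ℕ} (α : Biword r) : Prop := (topWord α).Perm (botWord α)

/-- An expression is circular if it is a linear combination of circuits. -/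
def IsCircular {r : ℕ} {R : Type} [CommRing R] (E : MonoidAlgebra R (Biword r)) : Prop :=
  ∀ α ∈ E.coeff.support, IsCircuit α

/-- The sorted list `i₁ < i₂ < ⋯ < i_l` of the elements of `J ⊆ A`. -/
def sortedJ {r : ℕ} (J : Finset (Fin r)) : List (Fin r) := J.sort (· ≤ ·)

/-- The permutations of a subset `J` of the alphabet, encoded as the permutations of
the whole alphabet fixing every letter outside `J`. -/
def permsOn (r : ℕ) (J : Finset (Fin r)) : Finset (Equiv.Perm (Fin r)) :=
  Finset.univ.filter fun σ => ∀ i ∉ J, σ i = i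

/-- The top word `σ(i₁)…σ(i_l)` of the biword of a permutation `σ` of `J`;
`inv σ` is by definition `wordInv` of this word. -/
def sigmaTop {r : ℕ} (J : Finset (Fin r)) (σ : Equiv.Perm (Fin r)) :
    List (Fin r) := (sortedJ J).map σ

/-- The biword `(σ(i₁)…σ(i_l) over i₁…i_l)` of a permutation `σ` of `J`. -/
def sigmaBW {r : ℕ} (J : Finset (Fin r)) (σ : Equiv.Perm (Fin r)) :
    Biword r := mkBW (sigmaTop J σ) (sortedJ J)

/-- A word of biletters is irreducible for a reduction system (given as the partial
function `rule` assigning to each length-2 left-hand side its right-hand side) if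
none of its length-2 factors is a left-hand side. -/
def IrredWord {r : ℕ} {R : Type} [CommRing R]
    (rule : Biletter r → Biletter r → Option (MonoidAlgebra R (Biword r)))
    (l : List (Biletter r)) : Prop :=
  List.Chain' (fun c d => rule c d = none) l

/-- `red` is the leftmost reduction associated with the reduction system `rule`:
the `R`-linear endomorphism of the biword algebra determined recursively by
`red β = β` for `β` irreducible, and `red (β₁ γ β₂) = red (β₁ ⬝ E_γ ⬝ β₂)` whenever
`γ = cd` is the leftmost length-2 factor of `β₁ γ β₂` that is a left-hand side
(leftmost-ness being expressed by irreducibility of `β₁ ++ [c]`), with `E_γ` the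
corresponding right-hand side.  (The recursion terminates, so such a map exists
and is unique.) -/
structure IsLeftmostReduction {r : ℕ} {R : Type} [CommRing R]
    (rule : Biletter r → Biletter r → Option (MonoidAlgebra R (Biword r)))
    (red : MonoidAlgebra R (Biword r) →ₗ[R] MonoidAlgebra R (Biword r)) : Prop where
  map_irred : ∀ l : List (Biletter r), IrredWord rule l →
    red (MonoidAlgebra.single (ofCols l) 1) = MonoidAlgebra.single (ofCols l) 1
  map_step : ∀ (l₁ : List (Biletter r)) (c d : Biletter r)
      (E : MonoidAlgebra R (Biword r)) (l₂ : List (Biletter r)),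
    rule c d = some E → IrredWord rule (l₁ ++ [c]) →
    red (MonoidAlgebra.single (ofCols (l₁ ++ c :: d :: l₂)) 1)
      = red (MonoidAlgebra.single (ofCols l₁) 1 * E * MonoidAlgebra.single (ofCols l₂) 1)

/-- Degree-`n` component `FB_n(1)` of `Ferm(1) ⬝ Bos(1)`, with coefficients in `ℤ`:
the sum over triples `(J, σ, w)` with `|J| + length w = n` of
`(-1)^{|J|} (-1)^{inv σ} ⬝ (biword of σ) ⬝ (w̄ over w)`. -/
def FB1 (r n : ℕ) : MonoidAlgebra ℤ (Biword r) :=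
  ∑ J : Finset (Fin r), ∑ σ ∈ permsOn r J,
    if J.card ≤ n then
      ∑ w : Fin (n - J.card) → Fin r,
        MonoidAlgebra.single
          (sigmaBW J σ * mkBW (sortWord (List.ofFn w)) (List.ofFn w))
          ((-1 : ℤ) ^ (J.card + wordInv (sigmaTop J σ)))
    else 0

/-- Degree-`n` component `FB_n(1)` of `Ferm(1) ⬝ Bos(1)`, with coefficients in
`ℤ[q,q⁻¹]` (the specialization `q = 1` of `FB_n(q)`). -/
def FB1q (r n : ℕ) : MonoidAlgebra (LaurentPolynomial ℤ) (Biword r) :=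
  ∑ J : Finset (Fin r), ∑ σ ∈ permsOn r J,
    if J.card ≤ n then
      ∑ w : Fin (n - J.card) → Fin r,
        MonoidAlgebra.single
          (sigmaBW J σ * mkBW (sortWord (List.ofFn w)) (List.ofFn w))
          ((-1 : LaurentPolynomial ℤ) ^ (J.card + wordInv (sigmaTop J σ)))
    else 0

/-- Degree-`n` component `FB_n(q)` of `Ferm(q) ⬝ Bos(q)`, with coefficients in
`ℤ[q,q⁻¹]` (with `q` the Laurent variable `T 1`): the coefficient of the biword
`(biword of σ) ⬝ (w̄ over w)` is `(-1)^{|J|} (-q)^{-inv σ} q^{inv w}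
= (-1)^{|J| + inv σ} q^{inv w - inv σ}`. -/
def FBq (r n : ℕ) : MonoidAlgebra (LaurentPolynomial ℤ) (Biword r) :=
  ∑ J : Finset (Fin r), ∑ σ ∈ permsOn r J,
    if J.card ≤ n then
      ∑ w : Fin (n - J.card) → Fin r,
        MonoidAlgebra.single
          (sigmaBW J σ * mkBW (sortWord (List.ofFn w)) (List.ofFn w))
          ((-1 : LaurentPolynomial ℤ) ^ (J.card + wordInv (sigmaTop J σ)) *
            T ((wordInv (List.ofFn w) : ℤ) - (wordInv (sigmaTop J σ) : ℤ)))
    else 0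

/-- The ring `ℤ[t,t⁻¹,q,q⁻¹]`, realized as Laurent polynomials in `q` over
Laurent polynomials in `t`. -/
abbrev Rtq : Type := LaurentPolynomial (LaurentPolynomial ℤ)

/-- The variable `q` of `ℤ[t,t⁻¹,q,q⁻¹]`. -/
def qv : Rtq := T 1
/-- The variable `t` of `ℤ[t,t⁻¹,q,q⁻¹]`. -/
def tv : Rtq := C (T 1)
/-- `t^k` for `k : ℤ`. -/
def tpow (k : ℤ) : Rtq := C (T k)
/-- `q^k` for `k : ℤ`. -/
def qpow (k : ℤ) : Rtq := T k

/-- Degree-`n` component `FB_n(t,q)` of `Ferm(t,q) ⬝ Bos(t,q)`, with coefficients in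
`ℤ[t,t⁻¹,q,q⁻¹]`: the coefficient of `(biword of σ) ⬝ (w̄ over w)` is
`(-1)^{|J|} t^{exc(biword of σ)} (-q)^{-inv σ} ⬝ t^{exc(w̄ over w)} q^{inv w}`. -/
def FBtq (r n : ℕ) : MonoidAlgebra Rtq (Biword r) :=
  ∑ J : Finset (Fin r), ∑ σ ∈ permsOn r J,
    if J.card ≤ n then
      ∑ w : Fin (n - J.card) → Fin r,
        MonoidAlgebra.single
          (sigmaBW J σ * mkBW (sortWord (List.ofFn w)) (List.ofFn w))
          ((-1 : Rtq) ^ (J.card + wordInv (sigmaTop J σ)) *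
            tpow ((excBW (sigmaBW J σ) : ℤ) +
              (excBW (mkBW (sortWord (List.ofFn w)) (List.ofFn w)) : ℤ)) *
            qpow ((wordInv (List.ofFn w) : ℤ) - (wordInv (sigmaTop J σ) : ℤ)))
    else 0

/-- Generators of the two-sided ideal `I(SR)`: `(xy over aa) − (yx over aa)` for `x>y`,
and `(xy over ab) − (yx over ba) − (yx over ab) + (xy over ba)` for `x>y`, `a>b`. -/
def SRgens (R : Type) [CommRing R] (r : ℕ) : Set (MonoidAlgebra R (Biword r)) :=
  {E | (∃ x y a : Fin r, y < x ∧
          E = MonoidAlgebra.single (mkBW [x, y] [a, a]) 1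
             - MonoidAlgebra.single (mkBW [y, x] [a, a]) 1) ∨
       (∃ x y a b : Fin r, y < x ∧ b < a ∧
          E = MonoidAlgebra.single (mkBW [x, y] [a, b]) 1
             - MonoidAlgebra.single (mkBW [y, x] [b, a]) 1
             - MonoidAlgebra.single (mkBW [y, x] [a, b]) 1
             + MonoidAlgebra.single (mkBW [x, y] [b, a]) 1)}

/-- The reduction system `(SR)`: for `x>y`, `(xy over aa) → (yx over aa)`, and for
`x>y`, `a>b`, `(xy over ab) → (yx over ba) + (yx over ab) − (xy over ba)`. -/
def SRrule (R : Type) [CommRing R] (r : ℕ) (c d : Biletter r) :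
    Option (MonoidAlgebra R (Biword r)) :=
  if d.1 < c.1 then
    if c.2 = d.2 then some (MonoidAlgebra.single (ofCols [d, c]) 1)
    else if d.2 < c.2 then
      some (MonoidAlgebra.single (ofCols [d, c]) 1
        + MonoidAlgebra.single (ofCols [(d.1, c.2), (c.1, d.2)]) 1
        - MonoidAlgebra.single (ofCols [(c.1, d.2), (d.1, c.2)]) 1)
    else none
  else none

-- infrastructure
namespace SRaux

variable {r : ℕ}

/-- abbreviation for basis elements -/
def S (r : ℕ) (l : List (Biletter r)) : MonoidAlgebra (LaurentPolynomial ℤ) (Biword r) :=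
  MonoidAlgebra.single (ofCols l) 1

lemma S_mul (u v : List (Biletter r)) : S r u * S r v = S r (u ++ v) := by
  unfold S
  rw [MonoidAlgebra.single_mul_single, one_mul]
  rfl

/-- cross inversions between two words -/
def cross {r : ℕ} (u v : List (Fin r)) : ℕ :=
  (u.map (fun a => v.countP (fun b => decide (b < a)))).sum

lemma wordInv_append (u v : List (Fin r)) :
    wordInv (u ++ v) = wordInv u + wordInv v + cross u v := by
  induction u with
  | nil => simp [wordInv, cross]
  | cons a u ih =>
      show (u ++ v).countP _ + wordInv (u ++ v) = _
      rw [List.countP_append, ih]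
      simp only [wordInv, cross, List.map_cons, List.sum_cons]
      omega

lemma cross_append_right (u v w : List (Fin r)) :
    cross u (v ++ w) = cross u v + cross u w := by
  simp only [cross, List.countP_append]
  rw [← List.sum_map_add]

lemma cross_perm_left {u u' : List (Fin r)} (h : u.Perm u') (v : List (Fin r)) :
    cross u v = cross u' v :=
  List.Perm.sum_eq (h.map _)

lemma cross_perm_right (u : List (Fin r)) {v v' : List (Fin r)} (h : v.Perm v') :
    cross u v = cross u v' := by
  unfold cross
  congr 1
  exact List.map_congr_left fun a _ => h.countP_eq _

/-- the termination measure -/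
def muL (l : List (Biletter r)) : ℕ :=
  wordInv (l.map Prod.fst) + wordInv (l.map Prod.snd)

lemma wordInv3 (a b c : List (Fin r)) :
    wordInv (a ++ b ++ c) =
      wordInv a + wordInv b + wordInv c + cross a b + cross a c + cross b c := by
  rw [List.append_assoc, wordInv_append, wordInv_append, cross_append_right]
  ring

lemma mu_lt (u v g g' : List (Biletter r))
    (ht : (g'.map Prod.fst).Perm (g.map Prod.fst))
    (hb : (g'.map Prod.snd).Perm (g.map Prod.snd))
    (hl : muL g' < muL g) :
    muL (u ++ g' ++ v) < muL (u ++ g ++ v) := by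
  unfold muL at *
  simp only [List.map_append, wordInv3]
  rw [cross_perm_right (u.map Prod.fst) ht, cross_perm_left ht (v.map Prod.fst),
    cross_perm_right (u.map Prod.snd) hb, cross_perm_left hb (v.map Prod.snd)]
  omega

end SRaux

namespace SRaux

variable {r : ℕ}

lemma perm2 (a b : Fin r) : [a, b].Perm [b, a] := List.Perm.swap b a []

lemma muL_pair (a b : Biletter r) :
    muL [a, b] = (if b.1 < a.1 then 1 else 0) + (if b.2 < a.2 then 1 else 0) := by
  simp [muL, wordInv, List.countP_cons, List.countP_nil]

lemma mu_swap (u v : List (Biletter r)) (p q : Biletter r)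
    (h1 : q.1 < p.1) (h2 : q.2 ≤ p.2) :
    muL (u ++ q :: p :: v) < muL (u ++ p :: q :: v) := by
  have := mu_lt u v [p, q] [q, p] (perm2 _ _) (perm2 _ _) ?_
  · simpa using this
  · rw [muL_pair, muL_pair]
    rcases lt_or_eq_of_le h2 with h | h
    · simp [h1, h, not_lt.2 h1.le, not_lt.2 h2]
    · simp [h1, h, not_lt.2 h1.le]

lemma mu_mid (u v : List (Biletter r)) (p q : Biletter r)
    (h1 : q.1 < p.1) (h2 : q.2 < p.2) :
    muL (u ++ (q.1, p.2) :: (p.1, q.2) :: v) < muL (u ++ p :: q :: v) := by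
  have := mu_lt u v [p, q] [(q.1, p.2), (p.1, q.2)] (perm2 _ _) (List.Perm.refl _) ?_
  · simpa using this
  · rw [muL_pair, muL_pair]
    simp [h1, h2, not_lt.2 h1.le]

lemma mu_third (u v : List (Biletter r)) (p q : Biletter r)
    (h1 : q.1 < p.1) (h2 : q.2 < p.2) :
    muL (u ++ (p.1, q.2) :: (q.1, p.2) :: v) < muL (u ++ p :: q :: v) := by
  have := mu_lt u v [p, q] [(p.1, q.2), (q.1, p.2)] (List.Perm.refl _) (perm2 _ _) ?_
  · simpa using this
  · rw [muL_pair, muL_pair]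
    simp [h1, h2, not_lt.2 h2.le]

end SRaux


namespace SRaux

variable {r : ℕ}

/-- the redex predicate -/
def Q (a b : Biletter r) : Prop := b.1 < a.1 ∧ b.2 ≤ a.2

instance : DecidableRel (Q (r := r)) := fun _ _ => instDecidableAnd

lemma rule_none_iff (c d : Biletter r) :
    SRrule (LaurentPolynomial ℤ) r c d = none ↔ ¬ Q c d := by
  unfold SRrule Q
  split_ifs with h1 h2 h3
  · simp [h1, le_of_eq h2.symm]
  · simp [h1, h3.le]
  · have hn : ¬ d.2 ≤ c.2 := by
      intro h
      rcases lt_or_eq_of_le h with h | h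
      · exact h3 h
      · exact h2 h.symm
    simp [hn]
  · simp [h1]

lemma irred_iff (l : List (Biletter r)) :
    IrredWord (SRrule (LaurentPolynomial ℤ) r) l ↔ List.Chain' (fun a b => ¬ Q a b) l := by
  unfold IrredWord
  constructor
  · exact fun h => h.imp fun a b hcd => (rule_none_iff _ _).1 hcd
  · exact fun h => h.imp fun a b hcd => (rule_none_iff _ _).2 hcd

lemma rule_eq (a b : Biletter r) (h1 : b.1 < a.1) (h2 : a.2 = b.2) :
    SRrule (LaurentPolynomial ℤ) r a b = some (S r [b, a]) := by
  unfold SRrule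
  rw [if_pos h1, if_pos h2]
  rfl

lemma rule_lt (a b : Biletter r) (h1 : b.1 < a.1) (h2 : b.2 < a.2) :
    SRrule (LaurentPolynomial ℤ) r a b
      = some (S r [b, a] + S r [(b.1, a.2), (a.1, b.2)] - S r [(a.1, b.2), (b.1, a.2)]) := by
  unfold SRrule
  rw [if_pos h1, if_neg (by exact fun h => absurd h2 (by simp [h])), if_pos h2]
  rfl

/-- find the leftmost redex -/
lemma find_redex : ∀ l : List (Biletter r),
    List.Chain' (fun a b => ¬ Q a b) l ∨
      ∃ m₁ p q m₂, l = m₁ ++ p :: q :: m₂ ∧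
        List.Chain' (fun a b => ¬ Q a b) (m₁ ++ [p]) ∧ Q p q
  | [] => Or.inl (by simp [List.Chain'])
  | [a] => Or.inl (by simp [List.Chain'])
  | a :: b :: t => by
      by_cases hab : Q a b
      · exact Or.inr ⟨[], a, b, t, rfl, by simp [List.Chain'], hab⟩
      · rcases find_redex (b :: t) with h | ⟨m₁, p, q, m₂, heq, hch, hpq⟩
        · exact Or.inl (List.isChain_cons_cons.2 ⟨hab, h⟩)
        · refine Or.inr ⟨a :: m₁, p, q, m₂, by rw [heq]; rfl, ?_, hpq⟩
          rw [List.cons_append]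
          refine List.isChain_cons.2 ⟨?_, hch⟩
          intro y hy
          have hhead : (m₁ ++ [p]).head? = some y := hy
          have : (b :: t).head? = some y := by
            rw [heq]
            cases m₁ with
            | nil => simpa using hhead
            | cons x m' => simpa using hhead
          simp at this
          subst this
          exact hab

end SRaux

namespace SRaux

section Star

variable {r : ℕ}
  (red : MonoidAlgebra (LaurentPolynomial ℤ) (Biword r) →ₗ[LaurentPolynomial ℤ]
      MonoidAlgebra (LaurentPolynomial ℤ) (Biword r))

/-- the statement of Theorem 3' (arbitrary-position reduction) up to measure `n` -/
def StarP (n : ℕ) : Prop :=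
  ∀ (l₁ : List (Biletter r)) (c d : Biletter r)
    (E : MonoidAlgebra (LaurentPolynomial ℤ) (Biword r)) (l₂ : List (Biletter r)),
    SRrule (LaurentPolynomial ℤ) r c d = some E → muL (l₁ ++ c :: d :: l₂) ≤ n →
    red (S r (l₁ ++ c :: d :: l₂)) = red (S r l₁ * E * S r l₂)

lemma stepEq {n : ℕ} (hIH : ∀ m, m < n → StarP red m)
    (u v : List (Biletter r)) (a b : Biletter r)
    (h1 : b.1 < a.1) (h2 : a.2 = b.2) (hlt : muL (u ++ a :: b :: v) < n) :
    red (S r (u ++ a :: b :: v)) = red (S r (u ++ b :: a :: v)) := by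
  have h := hIH _ hlt u a b _ v (rule_eq a b h1 h2) le_rfl
  rw [h, S_mul, S_mul]
  simp only [List.append_assoc, List.cons_append, List.nil_append]

lemma stepLt {n : ℕ} (hIH : ∀ m, m < n → StarP red m)
    (u v : List (Biletter r)) (a b : Biletter r)
    (h1 : b.1 < a.1) (h2 : b.2 < a.2) (hlt : muL (u ++ a :: b :: v) < n) :
    red (S r (u ++ a :: b :: v))
      = red (S r (u ++ b :: a :: v))
        + red (S r (u ++ (b.1, a.2) :: (a.1, b.2) :: v))
        - red (S r (u ++ (a.1, b.2) :: (b.1, a.2) :: v)) := by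
  have h := hIH _ hlt u a b _ v (rule_lt a b h1 h2) le_rfl
  rw [h]
  simp only [mul_add, add_mul, mul_sub, sub_mul, map_add, map_sub, S_mul,
    List.append_assoc, List.cons_append, List.nil_append]

end Star

end SRaux

namespace SRaux

section Star2

variable {r : ℕ}
  (red : MonoidAlgebra (LaurentPolynomial ℤ) (Biword r) →ₗ[LaurentPolynomial ℤ]
      MonoidAlgebra (LaurentPolynomial ℤ) (Biword r))

lemma rule_cases {c d : Biletter r} {E : MonoidAlgebra (LaurentPolynomial ℤ) (Biword r)}
    (h : SRrule (LaurentPolynomial ℤ) r c d = some E) :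
    (d.1 < c.1 ∧ c.2 = d.2 ∧ E = S r [d, c]) ∨
    (d.1 < c.1 ∧ d.2 < c.2 ∧
      E = S r [d, c] + S r [(d.1, c.2), (c.1, d.2)] - S r [(c.1, d.2), (d.1, c.2)]) := by
  unfold SRrule at h
  split_ifs at h with h1 h2 h3
  · exact Or.inl ⟨h1, h2, (Option.some_inj.1 h).symm⟩
  · exact Or.inr ⟨h1, h3, (Option.some_inj.1 h).symm⟩

lemma disjoint_case {n : ℕ}
    (hred : IsLeftmostReduction (SRrule (LaurentPolynomial ℤ) r) red)
    (hIH : ∀ m, m < n → StarP red m)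
    (m₁ m₂' l₂ : List (Biletter r)) (p q c d : Biletter r)
    (E : MonoidAlgebra (LaurentPolynomial ℤ) (Biword r))
    (hch : List.Chain' (fun a b => ¬ Q a b) (m₁ ++ [p]))
    (hpq : Q p q)
    (hE : SRrule (LaurentPolynomial ℤ) r c d = some E)
    (hmu : muL (m₁ ++ p :: q :: (m₂' ++ c :: d :: l₂)) ≤ n) :
    red (S r (m₁ ++ p :: q :: (m₂' ++ c :: d :: l₂)))
      = red (S r (m₁ ++ p :: q :: m₂') * E * S r l₂) := by
  obtain ⟨hx, hy⟩ := hpq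
  have irr : IrredWord (SRrule (LaurentPolynomial ℤ) r) (m₁ ++ [p]) := (irred_iff _).2 hch
  have mstep : ∀ (w : List (Biletter r)) F', SRrule (LaurentPolynomial ℤ) r p q = some F' →
      red (S r (m₁ ++ p :: q :: w)) = red (S r m₁ * F' * S r w) :=
    fun w F' hF' => hred.map_step m₁ p q F' w hF' irr
  have hb1 : muL (m₁ ++ q :: p :: (m₂' ++ c :: d :: l₂)) < n :=
    lt_of_lt_of_le (mu_swap m₁ _ p q hx hy) hmu
  rcases rule_cases hE with ⟨he1, he2, rfl⟩ | ⟨he1, he2, rfl⟩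
  · -- E with equal bottoms
    have stE : ∀ (g1 g2 : Biletter r), muL (m₁ ++ g1 :: g2 :: (m₂' ++ c :: d :: l₂)) < n →
        red (S r (m₁ ++ g1 :: g2 :: (m₂' ++ c :: d :: l₂)))
          = red (S r (m₁ ++ g1 :: g2 :: (m₂' ++ d :: c :: l₂))) := by
      intro g1 g2 h
      simpa only [List.append_assoc, List.cons_append, List.singleton_append,
        List.nil_append] using
        stepEq red hIH (m₁ ++ g1 :: g2 :: m₂') l₂ c d he1 he2
          (by simpa only [List.append_assoc, List.cons_append, List.singleton_append,
            List.nil_append] using h)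
    simp only [S_mul, List.append_assoc, List.cons_append, List.nil_append,
      List.singleton_append]
    rcases lt_or_eq_of_le hy with hy' | hy'
    · have hF := rule_lt p q hx hy'
      rw [mstep _ _ hF, mstep _ _ hF]
      simp only [mul_add, add_mul, mul_sub, sub_mul, map_add, map_sub, S_mul,
        List.append_assoc, List.cons_append, List.nil_append, List.singleton_append]
      have hb2 : muL (m₁ ++ (q.1, p.2) :: (p.1, q.2) :: (m₂' ++ c :: d :: l₂)) < n :=
        lt_of_lt_of_le (mu_mid m₁ _ p q hx hy') hmu
      have hb3 : muL (m₁ ++ (p.1, q.2) :: (q.1, p.2) :: (m₂' ++ c :: d :: l₂)) < n :=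
        lt_of_lt_of_le (mu_third m₁ _ p q hx hy') hmu
      rw [stE q p hb1, stE _ _ hb2, stE _ _ hb3]
    · have hF := rule_eq p q hx hy'.symm
      rw [mstep _ _ hF, mstep _ _ hF]
      simp only [mul_add, add_mul, mul_sub, sub_mul, map_add, map_sub, S_mul,
        List.append_assoc, List.cons_append, List.nil_append, List.singleton_append]
      rw [stE q p hb1]
  · -- E with distinct bottoms
    have stL : ∀ (g1 g2 : Biletter r), muL (m₁ ++ g1 :: g2 :: (m₂' ++ c :: d :: l₂)) < n →
        red (S r (m₁ ++ g1 :: g2 :: (m₂' ++ c :: d :: l₂)))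
          = red (S r (m₁ ++ g1 :: g2 :: (m₂' ++ d :: c :: l₂)))
            + red (S r (m₁ ++ g1 :: g2 :: (m₂' ++ (d.1, c.2) :: (c.1, d.2) :: l₂)))
            - red (S r (m₁ ++ g1 :: g2 :: (m₂' ++ (c.1, d.2) :: (d.1, c.2) :: l₂))) := by
      intro g1 g2 h
      simpa only [List.append_assoc, List.cons_append, List.singleton_append,
        List.nil_append] using
        stepLt red hIH (m₁ ++ g1 :: g2 :: m₂') l₂ c d he1 he2
          (by simpa only [List.append_assoc, List.cons_append, List.singleton_append,
            List.nil_append] using h)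
    simp only [mul_add, add_mul, mul_sub, sub_mul, map_add, map_sub, S_mul,
      List.append_assoc, List.cons_append, List.nil_append, List.singleton_append]
    rcases lt_or_eq_of_le hy with hy' | hy'
    · have hF := rule_lt p q hx hy'
      rw [mstep (m₂' ++ c :: d :: l₂) _ hF, mstep (m₂' ++ d :: c :: l₂) _ hF,
        mstep (m₂' ++ (d.1, c.2) :: (c.1, d.2) :: l₂) _ hF,
        mstep (m₂' ++ (c.1, d.2) :: (d.1, c.2) :: l₂) _ hF]
      simp only [mul_add, add_mul, mul_sub, sub_mul, map_add, map_sub, S_mul,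
        List.append_assoc, List.cons_append, List.nil_append, List.singleton_append]
      have hb2 : muL (m₁ ++ (q.1, p.2) :: (p.1, q.2) :: (m₂' ++ c :: d :: l₂)) < n :=
        lt_of_lt_of_le (mu_mid m₁ _ p q hx hy') hmu
      have hb3 : muL (m₁ ++ (p.1, q.2) :: (q.1, p.2) :: (m₂' ++ c :: d :: l₂)) < n :=
        lt_of_lt_of_le (mu_third m₁ _ p q hx hy') hmu
      rw [stL q p hb1, stL _ _ hb2, stL _ _ hb3]
      abel
    · have hF := rule_eq p q hx hy'.symm
      rw [mstep (m₂' ++ c :: d :: l₂) _ hF, mstep (m₂' ++ d :: c :: l₂) _ hF,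
        mstep (m₂' ++ (d.1, c.2) :: (c.1, d.2) :: l₂) _ hF,
        mstep (m₂' ++ (c.1, d.2) :: (d.1, c.2) :: l₂) _ hF]
      simp only [mul_add, add_mul, mul_sub, sub_mul, map_add, map_sub, S_mul,
        List.append_assoc, List.cons_append, List.nil_append, List.singleton_append]
      rw [stL q p hb1]

end Star2

end SRaux

namespace SRaux

variable {r : ℕ}

lemma perm3_123 {α : Type*} (a b c : α) : [a, b, c].Perm [a, b, c] := List.Perm.refl _
lemma perm3_213 {α : Type*} (a b c : α) : [b, a, c].Perm [a, b, c] := List.Perm.swap a b [c]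
lemma perm3_132 {α : Type*} (a b c : α) : [a, c, b].Perm [a, b, c] :=
  List.Perm.cons a (List.Perm.swap b c [])
lemma perm3_231 {α : Type*} (a b c : α) : [b, c, a].Perm [a, b, c] :=
  (List.Perm.cons b (List.Perm.swap a c [])).trans (perm3_213 a b c)
lemma perm3_312 {α : Type*} (a b c : α) : [c, a, b].Perm [a, b, c] :=
  (List.Perm.swap a c [b]).trans (perm3_132 a b c)
lemma perm3_321 {α : Type*} (a b c : α) : [c, b, a].Perm [a, b, c] :=
  (List.Perm.swap b c [a]).trans (perm3_231 a b c)

lemma muL_triple (a b c : Biletter r) :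
    muL [a, b, c] =
      ((if b.1 < a.1 then 1 else 0) + ((if c.1 < a.1 then 1 else 0) + (if c.1 < b.1 then 1 else 0)))
      + ((if b.2 < a.2 then 1 else 0) + ((if c.2 < a.2 then 1 else 0) + (if c.2 < b.2 then 1 else 0))) := by
  simp only [muL, List.map_cons, List.map_nil, wordInv, List.countP_cons, List.countP_nil,
    decide_eq_true_eq]
  split_ifs <;> omega

end SRaux

namespace SRaux

section Star3

variable {r : ℕ}
  (red : MonoidAlgebra (LaurentPolynomial ℤ) (Biword r) →ₗ[LaurentPolynomial ℤ]
      MonoidAlgebra (LaurentPolynomial ℤ) (Biword r))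

lemma overlap_case {n : ℕ}
    (hred : IsLeftmostReduction (SRrule (LaurentPolynomial ℤ) r) red)
    (hIH : ∀ m, m < n → StarP red m)
    (m₁ l₂ : List (Biletter r)) (p q e : Biletter r)
    (E : MonoidAlgebra (LaurentPolynomial ℤ) (Biword r))
    (hch : List.Chain' (fun a b => ¬ Q a b) (m₁ ++ [p]))
    (hpq : Q p q)
    (hE : SRrule (LaurentPolynomial ℤ) r q e = some E)
    (hmu : muL (m₁ ++ p :: q :: e :: l₂) ≤ n) :
    red (S r (m₁ ++ p :: q :: e :: l₂)) = red (S r (m₁ ++ [p]) * E * S r l₂) := by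
  obtain ⟨hx1, hy1⟩ := hpq
  have irr : IrredWord (SRrule (LaurentPolynomial ℤ) r) (m₁ ++ [p]) := (irred_iff _).2 hch
  have mstep : ∀ (w : List (Biletter r)) F', SRrule (LaurentPolynomial ℤ) r p q = some F' →
      red (S r (m₁ ++ p :: q :: w)) = red (S r m₁ * F' * S r w) :=
    fun w F' hF' => hred.map_step m₁ p q F' w hF' irr
  obtain ⟨X, A⟩ := p
  obtain ⟨Y, B⟩ := q
  obtain ⟨Z, C⟩ := e
  dsimp only at hx1 hy1
  rcases rule_cases hE with ⟨he1, he2, rfl⟩ | ⟨he1, he2, rfl⟩ <;>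
    dsimp only at he1 he2 <;>
    rcases lt_or_eq_of_le hy1 with hy | hy
  · -- subcase 1
    subst he2
    have tZX : Z < X := lt_trans he1 hx1
    have nXY : ¬ X < Y := not_lt.2 (le_of_lt hx1)
    have nYZ : ¬ Y < Z := not_lt.2 (le_of_lt he1)
    have nXZ : ¬ X < Z := not_lt.2 (le_of_lt tZX)
    have nAB : ¬ A < B := not_lt.2 (le_of_lt hy)
    have hb : ∀ a b c : Biletter r, [a.1, b.1, c.1].Perm [X, Y, Z] → [a.2, b.2, c.2].Perm [A, B, B] → muL [a, b, c] < muL [(X,A), (Y,B), (Z,B)] → muL (m₁ ++ a :: b :: c :: l₂) < n := by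
      intro a b c h1 h2 h3
      refine lt_of_lt_of_le ?_ hmu
      simpa only [List.append_assoc, List.cons_append, List.nil_append] using
        mu_lt m₁ l₂ [(X,A), (Y,B), (Z,B)] [a, b, c] (by simpa using h1) (by simpa using h2) h3
    rw [mstep ((Z,B) :: l₂) _ (rule_lt (X,A) (Y,B) hx1 hy)]
    simp only [mul_add, add_mul, mul_sub, sub_mul, map_add, map_sub, S_mul, List.append_assoc, List.cons_append, List.nil_append, List.singleton_append]
    have hw1 : muL (m₁ ++ (Y,B) :: (X,A) :: (Z,B) :: l₂) < n := hb (Y,B) (X,A) (Z,B) (perm3_213 X Y Z) (perm3_213 A B B) (by simp only [muL_triple, hx1, he1, tZX, nXY, nYZ, nXZ, hy, nAB, lt_self_iff_false, if_true, if_false]; omega)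
    have e1 : red (S r (m₁ ++ (Y,B) :: (X,A) :: (Z,B) :: l₂)) = red (S r (m₁ ++ (Y,B) :: (Z,B) :: (X,A) :: l₂)) + red (S r (m₁ ++ (Y,B) :: (Z,A) :: (X,B) :: l₂)) - red (S r (m₁ ++ (Y,B) :: (X,B) :: (Z,A) :: l₂)) := by
      simpa only [List.append_assoc, List.cons_append, List.singleton_append, List.nil_append] using stepLt red hIH (m₁ ++ [(Y,B)]) l₂ (X,A) (Z,B) tZX hy (by simpa only [List.append_assoc, List.cons_append, List.singleton_append, List.nil_append] using hw1)
    have hw2 : muL (m₁ ++ (Y,B) :: (Z,B) :: (X,A) :: l₂) < n := hb (Y,B) (Z,B) (X,A) (perm3_231 X Y Z) (perm3_231 A B B) (by simp only [muL_triple, hx1, he1, tZX, nXY, nYZ, nXZ, hy, nAB, lt_self_iff_false, if_true, if_false]; omega)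
    have e2 : red (S r (m₁ ++ (Y,B) :: (Z,B) :: (X,A) :: l₂)) = red (S r (m₁ ++ (Z,B) :: (Y,B) :: (X,A) :: l₂)) := by
      simpa only [List.append_assoc, List.cons_append, List.singleton_append, List.nil_append] using stepEq red hIH m₁ ((X,A) :: l₂) (Y,B) (Z,B) he1 rfl (by simpa only [List.append_assoc, List.cons_append, List.singleton_append, List.nil_append] using hw2)
    have hw3 : muL (m₁ ++ (Y,A) :: (X,B) :: (Z,B) :: l₂) < n := hb (Y,A) (X,B) (Z,B) (perm3_213 X Y Z) (perm3_123 A B B) (by simp only [muL_triple, hx1, he1, tZX, nXY, nYZ, nXZ, hy, nAB, lt_self_iff_false, if_true, if_false]; omega)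
    have e3 : red (S r (m₁ ++ (Y,A) :: (X,B) :: (Z,B) :: l₂)) = red (S r (m₁ ++ (Y,A) :: (Z,B) :: (X,B) :: l₂)) := by
      simpa only [List.append_assoc, List.cons_append, List.singleton_append, List.nil_append] using stepEq red hIH (m₁ ++ [(Y,A)]) l₂ (X,B) (Z,B) tZX rfl (by simpa only [List.append_assoc, List.cons_append, List.singleton_append, List.nil_append] using hw3)
    have hw4 : muL (m₁ ++ (Y,A) :: (Z,B) :: (X,B) :: l₂) < n := hb (Y,A) (Z,B) (X,B) (perm3_231 X Y Z) (perm3_123 A B B) (by simp only [muL_triple, hx1, he1, tZX, nXY, nYZ, nXZ, hy, nAB, lt_self_iff_false, if_true, if_false]; omega)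
    have e4 : red (S r (m₁ ++ (Y,A) :: (Z,B) :: (X,B) :: l₂)) = red (S r (m₁ ++ (Z,B) :: (Y,A) :: (X,B) :: l₂)) + red (S r (m₁ ++ (Z,A) :: (Y,B) :: (X,B) :: l₂)) - red (S r (m₁ ++ (Y,B) :: (Z,A) :: (X,B) :: l₂)) := by
      simpa only [List.append_assoc, List.cons_append, List.singleton_append, List.nil_append] using stepLt red hIH m₁ ((X,B) :: l₂) (Y,A) (Z,B) he1 hy (by simpa only [List.append_assoc, List.cons_append, List.singleton_append, List.nil_append] using hw4)
    have hw5 : muL (m₁ ++ (X,B) :: (Y,A) :: (Z,B) :: l₂) < n := hb (X,B) (Y,A) (Z,B) (perm3_123 X Y Z) (perm3_213 A B B) (by simp only [muL_triple, hx1, he1, tZX, nXY, nYZ, nXZ, hy, nAB, lt_self_iff_false, if_true, if_false]; omega)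
    have e5 : red (S r (m₁ ++ (X,B) :: (Y,A) :: (Z,B) :: l₂)) = red (S r (m₁ ++ (X,B) :: (Z,B) :: (Y,A) :: l₂)) + red (S r (m₁ ++ (X,B) :: (Z,A) :: (Y,B) :: l₂)) - red (S r (m₁ ++ (X,B) :: (Y,B) :: (Z,A) :: l₂)) := by
      simpa only [List.append_assoc, List.cons_append, List.singleton_append, List.nil_append] using stepLt red hIH (m₁ ++ [(X,B)]) l₂ (Y,A) (Z,B) he1 hy (by simpa only [List.append_assoc, List.cons_append, List.singleton_append, List.nil_append] using hw5)
    have hw6 : muL (m₁ ++ (X,B) :: (Z,B) :: (Y,A) :: l₂) < n := hb (X,B) (Z,B) (Y,A) (perm3_132 X Y Z) (perm3_231 A B B) (by simp only [muL_triple, hx1, he1, tZX, nXY, nYZ, nXZ, hy, nAB, lt_self_iff_false, if_true, if_false]; omega)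
    have e6 : red (S r (m₁ ++ (X,B) :: (Z,B) :: (Y,A) :: l₂)) = red (S r (m₁ ++ (Z,B) :: (X,B) :: (Y,A) :: l₂)) := by
      simpa only [List.append_assoc, List.cons_append, List.singleton_append, List.nil_append] using stepEq red hIH m₁ ((Y,A) :: l₂) (X,B) (Z,B) tZX rfl (by simpa only [List.append_assoc, List.cons_append, List.singleton_append, List.nil_append] using hw6)
    have hw7 : muL (m₁ ++ (X,B) :: (Y,B) :: (Z,A) :: l₂) < n := hb (X,B) (Y,B) (Z,A) (perm3_123 X Y Z) (perm3_231 A B B) (by simp only [muL_triple, hx1, he1, tZX, nXY, nYZ, nXZ, hy, nAB, lt_self_iff_false, if_true, if_false]; omega)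
    have e7 : red (S r (m₁ ++ (X,B) :: (Y,B) :: (Z,A) :: l₂)) = red (S r (m₁ ++ (Y,B) :: (X,B) :: (Z,A) :: l₂)) := by
      simpa only [List.append_assoc, List.cons_append, List.singleton_append, List.nil_append] using stepEq red hIH m₁ ((Z,A) :: l₂) (X,B) (Y,B) hx1 rfl (by simpa only [List.append_assoc, List.cons_append, List.singleton_append, List.nil_append] using hw7)
    have hw8 : muL (m₁ ++ (X,A) :: (Z,B) :: (Y,B) :: l₂) < n := hb (X,A) (Z,B) (Y,B) (perm3_132 X Y Z) (perm3_123 A B B) (by simp only [muL_triple, hx1, he1, tZX, nXY, nYZ, nXZ, hy, nAB, lt_self_iff_false, if_true, if_false]; omega)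
    have e8 : red (S r (m₁ ++ (X,A) :: (Z,B) :: (Y,B) :: l₂)) = red (S r (m₁ ++ (Z,B) :: (X,A) :: (Y,B) :: l₂)) + red (S r (m₁ ++ (Z,A) :: (X,B) :: (Y,B) :: l₂)) - red (S r (m₁ ++ (X,B) :: (Z,A) :: (Y,B) :: l₂)) := by
      simpa only [List.append_assoc, List.cons_append, List.singleton_append, List.nil_append] using stepLt red hIH m₁ ((Y,B) :: l₂) (X,A) (Z,B) tZX hy (by simpa only [List.append_assoc, List.cons_append, List.singleton_append, List.nil_append] using hw8)
    have hw9 : muL (m₁ ++ (Z,B) :: (X,A) :: (Y,B) :: l₂) < n := hb (Z,B) (X,A) (Y,B) (perm3_312 X Y Z) (perm3_213 A B B) (by simp only [muL_triple, hx1, he1, tZX, nXY, nYZ, nXZ, hy, nAB, lt_self_iff_false, if_true, if_false]; omega)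
    have e9 : red (S r (m₁ ++ (Z,B) :: (X,A) :: (Y,B) :: l₂)) = red (S r (m₁ ++ (Z,B) :: (Y,B) :: (X,A) :: l₂)) + red (S r (m₁ ++ (Z,B) :: (Y,A) :: (X,B) :: l₂)) - red (S r (m₁ ++ (Z,B) :: (X,B) :: (Y,A) :: l₂)) := by
      simpa only [List.append_assoc, List.cons_append, List.singleton_append, List.nil_append] using stepLt red hIH (m₁ ++ [(Z,B)]) l₂ (X,A) (Y,B) hx1 hy (by simpa only [List.append_assoc, List.cons_append, List.singleton_append, List.nil_append] using hw9)
    have hw10 : muL (m₁ ++ (Z,A) :: (X,B) :: (Y,B) :: l₂) < n := hb (Z,A) (X,B) (Y,B) (perm3_312 X Y Z) (perm3_123 A B B) (by simp only [muL_triple, hx1, he1, tZX, nXY, nYZ, nXZ, hy, nAB, lt_self_iff_false, if_true, if_false]; omega)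
    have e10 : red (S r (m₁ ++ (Z,A) :: (X,B) :: (Y,B) :: l₂)) = red (S r (m₁ ++ (Z,A) :: (Y,B) :: (X,B) :: l₂)) := by
      simpa only [List.append_assoc, List.cons_append, List.singleton_append, List.nil_append] using stepEq red hIH (m₁ ++ [(Z,A)]) l₂ (X,B) (Y,B) hx1 rfl (by simpa only [List.append_assoc, List.cons_append, List.singleton_append, List.nil_append] using hw10)
    rw [e1, e2, e3, e4, e5, e6, e7, e8, e9, e10]
    try abel
  · -- subcase 2
    subst he2
    subst hy
    have tZX : Z < X := lt_trans he1 hx1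
    have nXY : ¬ X < Y := not_lt.2 (le_of_lt hx1)
    have nYZ : ¬ Y < Z := not_lt.2 (le_of_lt he1)
    have nXZ : ¬ X < Z := not_lt.2 (le_of_lt tZX)
    have hb : ∀ a b c : Biletter r, [a.1, b.1, c.1].Perm [X, Y, Z] → [a.2, b.2, c.2].Perm [B, B, B] → muL [a, b, c] < muL [(X,B), (Y,B), (Z,B)] → muL (m₁ ++ a :: b :: c :: l₂) < n := by
      intro a b c h1 h2 h3
      refine lt_of_lt_of_le ?_ hmu
      simpa only [List.append_assoc, List.cons_append, List.nil_append] using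
        mu_lt m₁ l₂ [(X,B), (Y,B), (Z,B)] [a, b, c] (by simpa using h1) (by simpa using h2) h3
    rw [mstep ((Z,B) :: l₂) _ (rule_eq (X,B) (Y,B) hx1 rfl)]
    simp only [mul_add, add_mul, mul_sub, sub_mul, map_add, map_sub, S_mul, List.append_assoc, List.cons_append, List.nil_append, List.singleton_append]
    have hw1 : muL (m₁ ++ (Y,B) :: (X,B) :: (Z,B) :: l₂) < n := hb (Y,B) (X,B) (Z,B) (perm3_213 X Y Z) (perm3_123 B B B) (by simp only [muL_triple, hx1, he1, tZX, nXY, nYZ, nXZ, lt_self_iff_false, if_true, if_false]; omega)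
    have e1 : red (S r (m₁ ++ (Y,B) :: (X,B) :: (Z,B) :: l₂)) = red (S r (m₁ ++ (Y,B) :: (Z,B) :: (X,B) :: l₂)) := by
      simpa only [List.append_assoc, List.cons_append, List.singleton_append, List.nil_append] using stepEq red hIH (m₁ ++ [(Y,B)]) l₂ (X,B) (Z,B) tZX rfl (by simpa only [List.append_assoc, List.cons_append, List.singleton_append, List.nil_append] using hw1)
    have hw2 : muL (m₁ ++ (Y,B) :: (Z,B) :: (X,B) :: l₂) < n := hb (Y,B) (Z,B) (X,B) (perm3_231 X Y Z) (perm3_123 B B B) (by simp only [muL_triple, hx1, he1, tZX, nXY, nYZ, nXZ, lt_self_iff_false, if_true, if_false]; omega)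
    have e2 : red (S r (m₁ ++ (Y,B) :: (Z,B) :: (X,B) :: l₂)) = red (S r (m₁ ++ (Z,B) :: (Y,B) :: (X,B) :: l₂)) := by
      simpa only [List.append_assoc, List.cons_append, List.singleton_append, List.nil_append] using stepEq red hIH m₁ ((X,B) :: l₂) (Y,B) (Z,B) he1 rfl (by simpa only [List.append_assoc, List.cons_append, List.singleton_append, List.nil_append] using hw2)
    have hw3 : muL (m₁ ++ (X,B) :: (Z,B) :: (Y,B) :: l₂) < n := hb (X,B) (Z,B) (Y,B) (perm3_132 X Y Z) (perm3_123 B B B) (by simp only [muL_triple, hx1, he1, tZX, nXY, nYZ, nXZ, lt_self_iff_false, if_true, if_false]; omega)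
    have e3 : red (S r (m₁ ++ (X,B) :: (Z,B) :: (Y,B) :: l₂)) = red (S r (m₁ ++ (Z,B) :: (X,B) :: (Y,B) :: l₂)) := by
      simpa only [List.append_assoc, List.cons_append, List.singleton_append, List.nil_append] using stepEq red hIH m₁ ((Y,B) :: l₂) (X,B) (Z,B) tZX rfl (by simpa only [List.append_assoc, List.cons_append, List.singleton_append, List.nil_append] using hw3)
    have hw4 : muL (m₁ ++ (Z,B) :: (X,B) :: (Y,B) :: l₂) < n := hb (Z,B) (X,B) (Y,B) (perm3_312 X Y Z) (perm3_123 B B B) (by simp only [muL_triple, hx1, he1, tZX, nXY, nYZ, nXZ, lt_self_iff_false, if_true, if_false]; omega)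
    have e4 : red (S r (m₁ ++ (Z,B) :: (X,B) :: (Y,B) :: l₂)) = red (S r (m₁ ++ (Z,B) :: (Y,B) :: (X,B) :: l₂)) := by
      simpa only [List.append_assoc, List.cons_append, List.singleton_append, List.nil_append] using stepEq red hIH (m₁ ++ [(Z,B)]) l₂ (X,B) (Y,B) hx1 rfl (by simpa only [List.append_assoc, List.cons_append, List.singleton_append, List.nil_append] using hw4)
    rw [e1, e2, e3, e4]
    try abel
  · -- subcase 3
    have tZX : Z < X := lt_trans he1 hx1
    have nXY : ¬ X < Y := not_lt.2 (le_of_lt hx1)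
    have nYZ : ¬ Y < Z := not_lt.2 (le_of_lt he1)
    have nXZ : ¬ X < Z := not_lt.2 (le_of_lt tZX)
    have bCA : C < A := lt_trans he2 hy
    have nAB : ¬ A < B := not_lt.2 (le_of_lt hy)
    have nBC : ¬ B < C := not_lt.2 (le_of_lt he2)
    have nAC : ¬ A < C := not_lt.2 (le_of_lt bCA)
    have hb : ∀ a b c : Biletter r, [a.1, b.1, c.1].Perm [X, Y, Z] → [a.2, b.2, c.2].Perm [A, B, C] → muL [a, b, c] < muL [(X,A), (Y,B), (Z,C)] → muL (m₁ ++ a :: b :: c :: l₂) < n := by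
      intro a b c h1 h2 h3
      refine lt_of_lt_of_le ?_ hmu
      simpa only [List.append_assoc, List.cons_append, List.nil_append] using
        mu_lt m₁ l₂ [(X,A), (Y,B), (Z,C)] [a, b, c] (by simpa using h1) (by simpa using h2) h3
    rw [mstep ((Z,C) :: l₂) _ (rule_lt (X,A) (Y,B) hx1 hy)]
    simp only [mul_add, add_mul, mul_sub, sub_mul, map_add, map_sub, S_mul, List.append_assoc, List.cons_append, List.nil_append, List.singleton_append]
    have hw1 : muL (m₁ ++ (Y,B) :: (X,A) :: (Z,C) :: l₂) < n := hb (Y,B) (X,A) (Z,C) (perm3_213 X Y Z) (perm3_213 A B C) (by simp only [muL_triple, hx1, he1, tZX, nXY, nYZ, nXZ, hy, he2, bCA, nAB, nBC, nAC, lt_self_iff_false, if_true, if_false]; omega)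
    have e1 : red (S r (m₁ ++ (Y,B) :: (X,A) :: (Z,C) :: l₂)) = red (S r (m₁ ++ (Y,B) :: (Z,C) :: (X,A) :: l₂)) + red (S r (m₁ ++ (Y,B) :: (Z,A) :: (X,C) :: l₂)) - red (S r (m₁ ++ (Y,B) :: (X,C) :: (Z,A) :: l₂)) := by
      simpa only [List.append_assoc, List.cons_append, List.singleton_append, List.nil_append] using stepLt red hIH (m₁ ++ [(Y,B)]) l₂ (X,A) (Z,C) tZX bCA (by simpa only [List.append_assoc, List.cons_append, List.singleton_append, List.nil_append] using hw1)
    have hw2 : muL (m₁ ++ (Y,B) :: (Z,C) :: (X,A) :: l₂) < n := hb (Y,B) (Z,C) (X,A) (perm3_231 X Y Z) (perm3_231 A B C) (by simp only [muL_triple, hx1, he1, tZX, nXY, nYZ, nXZ, hy, he2, bCA, nAB, nBC, nAC, lt_self_iff_false, if_true, if_false]; omega)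
    have e2 : red (S r (m₁ ++ (Y,B) :: (Z,C) :: (X,A) :: l₂)) = red (S r (m₁ ++ (Z,C) :: (Y,B) :: (X,A) :: l₂)) + red (S r (m₁ ++ (Z,B) :: (Y,C) :: (X,A) :: l₂)) - red (S r (m₁ ++ (Y,C) :: (Z,B) :: (X,A) :: l₂)) := by
      simpa only [List.append_assoc, List.cons_append, List.singleton_append, List.nil_append] using stepLt red hIH m₁ ((X,A) :: l₂) (Y,B) (Z,C) he1 he2 (by simpa only [List.append_assoc, List.cons_append, List.singleton_append, List.nil_append] using hw2)
    have hw3 : muL (m₁ ++ (Y,A) :: (X,B) :: (Z,C) :: l₂) < n := hb (Y,A) (X,B) (Z,C) (perm3_213 X Y Z) (perm3_123 A B C) (by simp only [muL_triple, hx1, he1, tZX, nXY, nYZ, nXZ, hy, he2, bCA, nAB, nBC, nAC, lt_self_iff_false, if_true, if_false]; omega)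
    have e3 : red (S r (m₁ ++ (Y,A) :: (X,B) :: (Z,C) :: l₂)) = red (S r (m₁ ++ (Y,A) :: (Z,C) :: (X,B) :: l₂)) + red (S r (m₁ ++ (Y,A) :: (Z,B) :: (X,C) :: l₂)) - red (S r (m₁ ++ (Y,A) :: (X,C) :: (Z,B) :: l₂)) := by
      simpa only [List.append_assoc, List.cons_append, List.singleton_append, List.nil_append] using stepLt red hIH (m₁ ++ [(Y,A)]) l₂ (X,B) (Z,C) tZX he2 (by simpa only [List.append_assoc, List.cons_append, List.singleton_append, List.nil_append] using hw3)
    have hw4 : muL (m₁ ++ (Y,A) :: (Z,C) :: (X,B) :: l₂) < n := hb (Y,A) (Z,C) (X,B) (perm3_231 X Y Z) (perm3_132 A B C) (by simp only [muL_triple, hx1, he1, tZX, nXY, nYZ, nXZ, hy, he2, bCA, nAB, nBC, nAC, lt_self_iff_false, if_true, if_false]; omega)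
    have e4 : red (S r (m₁ ++ (Y,A) :: (Z,C) :: (X,B) :: l₂)) = red (S r (m₁ ++ (Z,C) :: (Y,A) :: (X,B) :: l₂)) + red (S r (m₁ ++ (Z,A) :: (Y,C) :: (X,B) :: l₂)) - red (S r (m₁ ++ (Y,C) :: (Z,A) :: (X,B) :: l₂)) := by
      simpa only [List.append_assoc, List.cons_append, List.singleton_append, List.nil_append] using stepLt red hIH m₁ ((X,B) :: l₂) (Y,A) (Z,C) he1 bCA (by simpa only [List.append_assoc, List.cons_append, List.singleton_append, List.nil_append] using hw4)
    have hw5 : muL (m₁ ++ (Y,A) :: (Z,B) :: (X,C) :: l₂) < n := hb (Y,A) (Z,B) (X,C) (perm3_231 X Y Z) (perm3_123 A B C) (by simp only [muL_triple, hx1, he1, tZX, nXY, nYZ, nXZ, hy, he2, bCA, nAB, nBC, nAC, lt_self_iff_false, if_true, if_false]; omega)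
    have e5 : red (S r (m₁ ++ (Y,A) :: (Z,B) :: (X,C) :: l₂)) = red (S r (m₁ ++ (Z,B) :: (Y,A) :: (X,C) :: l₂)) + red (S r (m₁ ++ (Z,A) :: (Y,B) :: (X,C) :: l₂)) - red (S r (m₁ ++ (Y,B) :: (Z,A) :: (X,C) :: l₂)) := by
      simpa only [List.append_assoc, List.cons_append, List.singleton_append, List.nil_append] using stepLt red hIH m₁ ((X,C) :: l₂) (Y,A) (Z,B) he1 hy (by simpa only [List.append_assoc, List.cons_append, List.singleton_append, List.nil_append] using hw5)
    have hw6 : muL (m₁ ++ (X,B) :: (Y,A) :: (Z,C) :: l₂) < n := hb (X,B) (Y,A) (Z,C) (perm3_123 X Y Z) (perm3_213 A B C) (by simp only [muL_triple, hx1, he1, tZX, nXY, nYZ, nXZ, hy, he2, bCA, nAB, nBC, nAC, lt_self_iff_false, if_true, if_false]; omega)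
    have e6 : red (S r (m₁ ++ (X,B) :: (Y,A) :: (Z,C) :: l₂)) = red (S r (m₁ ++ (X,B) :: (Z,C) :: (Y,A) :: l₂)) + red (S r (m₁ ++ (X,B) :: (Z,A) :: (Y,C) :: l₂)) - red (S r (m₁ ++ (X,B) :: (Y,C) :: (Z,A) :: l₂)) := by
      simpa only [List.append_assoc, List.cons_append, List.singleton_append, List.nil_append] using stepLt red hIH (m₁ ++ [(X,B)]) l₂ (Y,A) (Z,C) he1 bCA (by simpa only [List.append_assoc, List.cons_append, List.singleton_append, List.nil_append] using hw6)
    have hw7 : muL (m₁ ++ (X,B) :: (Z,C) :: (Y,A) :: l₂) < n := hb (X,B) (Z,C) (Y,A) (perm3_132 X Y Z) (perm3_231 A B C) (by simp only [muL_triple, hx1, he1, tZX, nXY, nYZ, nXZ, hy, he2, bCA, nAB, nBC, nAC, lt_self_iff_false, if_true, if_false]; omega)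
    have e7 : red (S r (m₁ ++ (X,B) :: (Z,C) :: (Y,A) :: l₂)) = red (S r (m₁ ++ (Z,C) :: (X,B) :: (Y,A) :: l₂)) + red (S r (m₁ ++ (Z,B) :: (X,C) :: (Y,A) :: l₂)) - red (S r (m₁ ++ (X,C) :: (Z,B) :: (Y,A) :: l₂)) := by
      simpa only [List.append_assoc, List.cons_append, List.singleton_append, List.nil_append] using stepLt red hIH m₁ ((Y,A) :: l₂) (X,B) (Z,C) tZX he2 (by simpa only [List.append_assoc, List.cons_append, List.singleton_append, List.nil_append] using hw7)
    have hw8 : muL (m₁ ++ (X,B) :: (Y,C) :: (Z,A) :: l₂) < n := hb (X,B) (Y,C) (Z,A) (perm3_123 X Y Z) (perm3_231 A B C) (by simp only [muL_triple, hx1, he1, tZX, nXY, nYZ, nXZ, hy, he2, bCA, nAB, nBC, nAC, lt_self_iff_false, if_true, if_false]; omega)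
    have e8 : red (S r (m₁ ++ (X,B) :: (Y,C) :: (Z,A) :: l₂)) = red (S r (m₁ ++ (Y,C) :: (X,B) :: (Z,A) :: l₂)) + red (S r (m₁ ++ (Y,B) :: (X,C) :: (Z,A) :: l₂)) - red (S r (m₁ ++ (X,C) :: (Y,B) :: (Z,A) :: l₂)) := by
      simpa only [List.append_assoc, List.cons_append, List.singleton_append, List.nil_append] using stepLt red hIH m₁ ((Z,A) :: l₂) (X,B) (Y,C) hx1 he2 (by simpa only [List.append_assoc, List.cons_append, List.singleton_append, List.nil_append] using hw8)
    have hw9 : muL (m₁ ++ (X,A) :: (Z,C) :: (Y,B) :: l₂) < n := hb (X,A) (Z,C) (Y,B) (perm3_132 X Y Z) (perm3_132 A B C) (by simp only [muL_triple, hx1, he1, tZX, nXY, nYZ, nXZ, hy, he2, bCA, nAB, nBC, nAC, lt_self_iff_false, if_true, if_false]; omega)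
    have e9 : red (S r (m₁ ++ (X,A) :: (Z,C) :: (Y,B) :: l₂)) = red (S r (m₁ ++ (Z,C) :: (X,A) :: (Y,B) :: l₂)) + red (S r (m₁ ++ (Z,A) :: (X,C) :: (Y,B) :: l₂)) - red (S r (m₁ ++ (X,C) :: (Z,A) :: (Y,B) :: l₂)) := by
      simpa only [List.append_assoc, List.cons_append, List.singleton_append, List.nil_append] using stepLt red hIH m₁ ((Y,B) :: l₂) (X,A) (Z,C) tZX bCA (by simpa only [List.append_assoc, List.cons_append, List.singleton_append, List.nil_append] using hw9)
    have hw10 : muL (m₁ ++ (Z,C) :: (X,A) :: (Y,B) :: l₂) < n := hb (Z,C) (X,A) (Y,B) (perm3_312 X Y Z) (perm3_312 A B C) (by simp only [muL_triple, hx1, he1, tZX, nXY, nYZ, nXZ, hy, he2, bCA, nAB, nBC, nAC, lt_self_iff_false, if_true, if_false]; omega)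
    have e10 : red (S r (m₁ ++ (Z,C) :: (X,A) :: (Y,B) :: l₂)) = red (S r (m₁ ++ (Z,C) :: (Y,B) :: (X,A) :: l₂)) + red (S r (m₁ ++ (Z,C) :: (Y,A) :: (X,B) :: l₂)) - red (S r (m₁ ++ (Z,C) :: (X,B) :: (Y,A) :: l₂)) := by
      simpa only [List.append_assoc, List.cons_append, List.singleton_append, List.nil_append] using stepLt red hIH (m₁ ++ [(Z,C)]) l₂ (X,A) (Y,B) hx1 hy (by simpa only [List.append_assoc, List.cons_append, List.singleton_append, List.nil_append] using hw10)
    have hw11 : muL (m₁ ++ (X,A) :: (Z,B) :: (Y,C) :: l₂) < n := hb (X,A) (Z,B) (Y,C) (perm3_132 X Y Z) (perm3_123 A B C) (by simp only [muL_triple, hx1, he1, tZX, nXY, nYZ, nXZ, hy, he2, bCA, nAB, nBC, nAC, lt_self_iff_false, if_true, if_false]; omega)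
    have e11 : red (S r (m₁ ++ (X,A) :: (Z,B) :: (Y,C) :: l₂)) = red (S r (m₁ ++ (Z,B) :: (X,A) :: (Y,C) :: l₂)) + red (S r (m₁ ++ (Z,A) :: (X,B) :: (Y,C) :: l₂)) - red (S r (m₁ ++ (X,B) :: (Z,A) :: (Y,C) :: l₂)) := by
      simpa only [List.append_assoc, List.cons_append, List.singleton_append, List.nil_append] using stepLt red hIH m₁ ((Y,C) :: l₂) (X,A) (Z,B) tZX hy (by simpa only [List.append_assoc, List.cons_append, List.singleton_append, List.nil_append] using hw11)
    have hw12 : muL (m₁ ++ (Z,B) :: (X,A) :: (Y,C) :: l₂) < n := hb (Z,B) (X,A) (Y,C) (perm3_312 X Y Z) (perm3_213 A B C) (by simp only [muL_triple, hx1, he1, tZX, nXY, nYZ, nXZ, hy, he2, bCA, nAB, nBC, nAC, lt_self_iff_false, if_true, if_false]; omega)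
    have e12 : red (S r (m₁ ++ (Z,B) :: (X,A) :: (Y,C) :: l₂)) = red (S r (m₁ ++ (Z,B) :: (Y,C) :: (X,A) :: l₂)) + red (S r (m₁ ++ (Z,B) :: (Y,A) :: (X,C) :: l₂)) - red (S r (m₁ ++ (Z,B) :: (X,C) :: (Y,A) :: l₂)) := by
      simpa only [List.append_assoc, List.cons_append, List.singleton_append, List.nil_append] using stepLt red hIH (m₁ ++ [(Z,B)]) l₂ (X,A) (Y,C) hx1 bCA (by simpa only [List.append_assoc, List.cons_append, List.singleton_append, List.nil_append] using hw12)
    have hw13 : muL (m₁ ++ (Z,A) :: (X,B) :: (Y,C) :: l₂) < n := hb (Z,A) (X,B) (Y,C) (perm3_312 X Y Z) (perm3_123 A B C) (by simp only [muL_triple, hx1, he1, tZX, nXY, nYZ, nXZ, hy, he2, bCA, nAB, nBC, nAC, lt_self_iff_false, if_true, if_false]; omega)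
    have e13 : red (S r (m₁ ++ (Z,A) :: (X,B) :: (Y,C) :: l₂)) = red (S r (m₁ ++ (Z,A) :: (Y,C) :: (X,B) :: l₂)) + red (S r (m₁ ++ (Z,A) :: (Y,B) :: (X,C) :: l₂)) - red (S r (m₁ ++ (Z,A) :: (X,C) :: (Y,B) :: l₂)) := by
      simpa only [List.append_assoc, List.cons_append, List.singleton_append, List.nil_append] using stepLt red hIH (m₁ ++ [(Z,A)]) l₂ (X,B) (Y,C) hx1 he2 (by simpa only [List.append_assoc, List.cons_append, List.singleton_append, List.nil_append] using hw13)
    have hw14 : muL (m₁ ++ (X,A) :: (Y,C) :: (Z,B) :: l₂) < n := hb (X,A) (Y,C) (Z,B) (perm3_123 X Y Z) (perm3_132 A B C) (by simp only [muL_triple, hx1, he1, tZX, nXY, nYZ, nXZ, hy, he2, bCA, nAB, nBC, nAC, lt_self_iff_false, if_true, if_false]; omega)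
    have e14 : red (S r (m₁ ++ (X,A) :: (Y,C) :: (Z,B) :: l₂)) = red (S r (m₁ ++ (Y,C) :: (X,A) :: (Z,B) :: l₂)) + red (S r (m₁ ++ (Y,A) :: (X,C) :: (Z,B) :: l₂)) - red (S r (m₁ ++ (X,C) :: (Y,A) :: (Z,B) :: l₂)) := by
      simpa only [List.append_assoc, List.cons_append, List.singleton_append, List.nil_append] using stepLt red hIH m₁ ((Z,B) :: l₂) (X,A) (Y,C) hx1 bCA (by simpa only [List.append_assoc, List.cons_append, List.singleton_append, List.nil_append] using hw14)
    have hw15 : muL (m₁ ++ (Y,C) :: (X,A) :: (Z,B) :: l₂) < n := hb (Y,C) (X,A) (Z,B) (perm3_213 X Y Z) (perm3_312 A B C) (by simp only [muL_triple, hx1, he1, tZX, nXY, nYZ, nXZ, hy, he2, bCA, nAB, nBC, nAC, lt_self_iff_false, if_true, if_false]; omega)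
    have e15 : red (S r (m₁ ++ (Y,C) :: (X,A) :: (Z,B) :: l₂)) = red (S r (m₁ ++ (Y,C) :: (Z,B) :: (X,A) :: l₂)) + red (S r (m₁ ++ (Y,C) :: (Z,A) :: (X,B) :: l₂)) - red (S r (m₁ ++ (Y,C) :: (X,B) :: (Z,A) :: l₂)) := by
      simpa only [List.append_assoc, List.cons_append, List.singleton_append, List.nil_append] using stepLt red hIH (m₁ ++ [(Y,C)]) l₂ (X,A) (Z,B) tZX hy (by simpa only [List.append_assoc, List.cons_append, List.singleton_append, List.nil_append] using hw15)
    have hw16 : muL (m₁ ++ (X,C) :: (Y,A) :: (Z,B) :: l₂) < n := hb (X,C) (Y,A) (Z,B) (perm3_123 X Y Z) (perm3_312 A B C) (by simp only [muL_triple, hx1, he1, tZX, nXY, nYZ, nXZ, hy, he2, bCA, nAB, nBC, nAC, lt_self_iff_false, if_true, if_false]; omega)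
    have e16 : red (S r (m₁ ++ (X,C) :: (Y,A) :: (Z,B) :: l₂)) = red (S r (m₁ ++ (X,C) :: (Z,B) :: (Y,A) :: l₂)) + red (S r (m₁ ++ (X,C) :: (Z,A) :: (Y,B) :: l₂)) - red (S r (m₁ ++ (X,C) :: (Y,B) :: (Z,A) :: l₂)) := by
      simpa only [List.append_assoc, List.cons_append, List.singleton_append, List.nil_append] using stepLt red hIH (m₁ ++ [(X,C)]) l₂ (Y,A) (Z,B) he1 hy (by simpa only [List.append_assoc, List.cons_append, List.singleton_append, List.nil_append] using hw16)
    rw [e1, e2, e3, e4, e5, e6, e7, e8, e9, e10, e11, e12, e13, e14, e15, e16]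
    try abel
  · -- subcase 4
    subst hy
    have tZX : Z < X := lt_trans he1 hx1
    have nXY : ¬ X < Y := not_lt.2 (le_of_lt hx1)
    have nYZ : ¬ Y < Z := not_lt.2 (le_of_lt he1)
    have nXZ : ¬ X < Z := not_lt.2 (le_of_lt tZX)
    have nBC : ¬ B < C := not_lt.2 (le_of_lt he2)
    have hb : ∀ a b c : Biletter r, [a.1, b.1, c.1].Perm [X, Y, Z] → [a.2, b.2, c.2].Perm [B, B, C] → muL [a, b, c] < muL [(X,B), (Y,B), (Z,C)] → muL (m₁ ++ a :: b :: c :: l₂) < n := by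
      intro a b c h1 h2 h3
      refine lt_of_lt_of_le ?_ hmu
      simpa only [List.append_assoc, List.cons_append, List.nil_append] using
        mu_lt m₁ l₂ [(X,B), (Y,B), (Z,C)] [a, b, c] (by simpa using h1) (by simpa using h2) h3
    rw [mstep ((Z,C) :: l₂) _ (rule_eq (X,B) (Y,B) hx1 rfl)]
    simp only [mul_add, add_mul, mul_sub, sub_mul, map_add, map_sub, S_mul, List.append_assoc, List.cons_append, List.nil_append, List.singleton_append]
    have hw1 : muL (m₁ ++ (Y,B) :: (X,B) :: (Z,C) :: l₂) < n := hb (Y,B) (X,B) (Z,C) (perm3_213 X Y Z) (perm3_123 B B C) (by simp only [muL_triple, hx1, he1, tZX, nXY, nYZ, nXZ, he2, nBC, lt_self_iff_false, if_true, if_false]; omega)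
    have e1 : red (S r (m₁ ++ (Y,B) :: (X,B) :: (Z,C) :: l₂)) = red (S r (m₁ ++ (Y,B) :: (Z,C) :: (X,B) :: l₂)) + red (S r (m₁ ++ (Y,B) :: (Z,B) :: (X,C) :: l₂)) - red (S r (m₁ ++ (Y,B) :: (X,C) :: (Z,B) :: l₂)) := by
      simpa only [List.append_assoc, List.cons_append, List.singleton_append, List.nil_append] using stepLt red hIH (m₁ ++ [(Y,B)]) l₂ (X,B) (Z,C) tZX he2 (by simpa only [List.append_assoc, List.cons_append, List.singleton_append, List.nil_append] using hw1)
    have hw2 : muL (m₁ ++ (Y,B) :: (Z,C) :: (X,B) :: l₂) < n := hb (Y,B) (Z,C) (X,B) (perm3_231 X Y Z) (perm3_132 B B C) (by simp only [muL_triple, hx1, he1, tZX, nXY, nYZ, nXZ, he2, nBC, lt_self_iff_false, if_true, if_false]; omega)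
    have e2 : red (S r (m₁ ++ (Y,B) :: (Z,C) :: (X,B) :: l₂)) = red (S r (m₁ ++ (Z,C) :: (Y,B) :: (X,B) :: l₂)) + red (S r (m₁ ++ (Z,B) :: (Y,C) :: (X,B) :: l₂)) - red (S r (m₁ ++ (Y,C) :: (Z,B) :: (X,B) :: l₂)) := by
      simpa only [List.append_assoc, List.cons_append, List.singleton_append, List.nil_append] using stepLt red hIH m₁ ((X,B) :: l₂) (Y,B) (Z,C) he1 he2 (by simpa only [List.append_assoc, List.cons_append, List.singleton_append, List.nil_append] using hw2)
    have hw3 : muL (m₁ ++ (Y,B) :: (Z,B) :: (X,C) :: l₂) < n := hb (Y,B) (Z,B) (X,C) (perm3_231 X Y Z) (perm3_123 B B C) (by simp only [muL_triple, hx1, he1, tZX, nXY, nYZ, nXZ, he2, nBC, lt_self_iff_false, if_true, if_false]; omega)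
    have e3 : red (S r (m₁ ++ (Y,B) :: (Z,B) :: (X,C) :: l₂)) = red (S r (m₁ ++ (Z,B) :: (Y,B) :: (X,C) :: l₂)) := by
      simpa only [List.append_assoc, List.cons_append, List.singleton_append, List.nil_append] using stepEq red hIH m₁ ((X,C) :: l₂) (Y,B) (Z,B) he1 rfl (by simpa only [List.append_assoc, List.cons_append, List.singleton_append, List.nil_append] using hw3)
    have hw4 : muL (m₁ ++ (X,B) :: (Z,C) :: (Y,B) :: l₂) < n := hb (X,B) (Z,C) (Y,B) (perm3_132 X Y Z) (perm3_132 B B C) (by simp only [muL_triple, hx1, he1, tZX, nXY, nYZ, nXZ, he2, nBC, lt_self_iff_false, if_true, if_false]; omega)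
    have e4 : red (S r (m₁ ++ (X,B) :: (Z,C) :: (Y,B) :: l₂)) = red (S r (m₁ ++ (Z,C) :: (X,B) :: (Y,B) :: l₂)) + red (S r (m₁ ++ (Z,B) :: (X,C) :: (Y,B) :: l₂)) - red (S r (m₁ ++ (X,C) :: (Z,B) :: (Y,B) :: l₂)) := by
      simpa only [List.append_assoc, List.cons_append, List.singleton_append, List.nil_append] using stepLt red hIH m₁ ((Y,B) :: l₂) (X,B) (Z,C) tZX he2 (by simpa only [List.append_assoc, List.cons_append, List.singleton_append, List.nil_append] using hw4)
    have hw5 : muL (m₁ ++ (Z,C) :: (X,B) :: (Y,B) :: l₂) < n := hb (Z,C) (X,B) (Y,B) (perm3_312 X Y Z) (perm3_312 B B C) (by simp only [muL_triple, hx1, he1, tZX, nXY, nYZ, nXZ, he2, nBC, lt_self_iff_false, if_true, if_false]; omega)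
    have e5 : red (S r (m₁ ++ (Z,C) :: (X,B) :: (Y,B) :: l₂)) = red (S r (m₁ ++ (Z,C) :: (Y,B) :: (X,B) :: l₂)) := by
      simpa only [List.append_assoc, List.cons_append, List.singleton_append, List.nil_append] using stepEq red hIH (m₁ ++ [(Z,C)]) l₂ (X,B) (Y,B) hx1 rfl (by simpa only [List.append_assoc, List.cons_append, List.singleton_append, List.nil_append] using hw5)
    have hw6 : muL (m₁ ++ (X,B) :: (Z,B) :: (Y,C) :: l₂) < n := hb (X,B) (Z,B) (Y,C) (perm3_132 X Y Z) (perm3_123 B B C) (by simp only [muL_triple, hx1, he1, tZX, nXY, nYZ, nXZ, he2, nBC, lt_self_iff_false, if_true, if_false]; omega)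
    have e6 : red (S r (m₁ ++ (X,B) :: (Z,B) :: (Y,C) :: l₂)) = red (S r (m₁ ++ (Z,B) :: (X,B) :: (Y,C) :: l₂)) := by
      simpa only [List.append_assoc, List.cons_append, List.singleton_append, List.nil_append] using stepEq red hIH m₁ ((Y,C) :: l₂) (X,B) (Z,B) tZX rfl (by simpa only [List.append_assoc, List.cons_append, List.singleton_append, List.nil_append] using hw6)
    have hw7 : muL (m₁ ++ (Z,B) :: (X,B) :: (Y,C) :: l₂) < n := hb (Z,B) (X,B) (Y,C) (perm3_312 X Y Z) (perm3_123 B B C) (by simp only [muL_triple, hx1, he1, tZX, nXY, nYZ, nXZ, he2, nBC, lt_self_iff_false, if_true, if_false]; omega)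
    have e7 : red (S r (m₁ ++ (Z,B) :: (X,B) :: (Y,C) :: l₂)) = red (S r (m₁ ++ (Z,B) :: (Y,C) :: (X,B) :: l₂)) + red (S r (m₁ ++ (Z,B) :: (Y,B) :: (X,C) :: l₂)) - red (S r (m₁ ++ (Z,B) :: (X,C) :: (Y,B) :: l₂)) := by
      simpa only [List.append_assoc, List.cons_append, List.singleton_append, List.nil_append] using stepLt red hIH (m₁ ++ [(Z,B)]) l₂ (X,B) (Y,C) hx1 he2 (by simpa only [List.append_assoc, List.cons_append, List.singleton_append, List.nil_append] using hw7)
    have hw8 : muL (m₁ ++ (X,B) :: (Y,C) :: (Z,B) :: l₂) < n := hb (X,B) (Y,C) (Z,B) (perm3_123 X Y Z) (perm3_132 B B C) (by simp only [muL_triple, hx1, he1, tZX, nXY, nYZ, nXZ, he2, nBC, lt_self_iff_false, if_true, if_false]; omega)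
    have e8 : red (S r (m₁ ++ (X,B) :: (Y,C) :: (Z,B) :: l₂)) = red (S r (m₁ ++ (Y,C) :: (X,B) :: (Z,B) :: l₂)) + red (S r (m₁ ++ (Y,B) :: (X,C) :: (Z,B) :: l₂)) - red (S r (m₁ ++ (X,C) :: (Y,B) :: (Z,B) :: l₂)) := by
      simpa only [List.append_assoc, List.cons_append, List.singleton_append, List.nil_append] using stepLt red hIH m₁ ((Z,B) :: l₂) (X,B) (Y,C) hx1 he2 (by simpa only [List.append_assoc, List.cons_append, List.singleton_append, List.nil_append] using hw8)
    have hw9 : muL (m₁ ++ (Y,C) :: (X,B) :: (Z,B) :: l₂) < n := hb (Y,C) (X,B) (Z,B) (perm3_213 X Y Z) (perm3_312 B B C) (by simp only [muL_triple, hx1, he1, tZX, nXY, nYZ, nXZ, he2, nBC, lt_self_iff_false, if_true, if_false]; omega)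
    have e9 : red (S r (m₁ ++ (Y,C) :: (X,B) :: (Z,B) :: l₂)) = red (S r (m₁ ++ (Y,C) :: (Z,B) :: (X,B) :: l₂)) := by
      simpa only [List.append_assoc, List.cons_append, List.singleton_append, List.nil_append] using stepEq red hIH (m₁ ++ [(Y,C)]) l₂ (X,B) (Z,B) tZX rfl (by simpa only [List.append_assoc, List.cons_append, List.singleton_append, List.nil_append] using hw9)
    have hw10 : muL (m₁ ++ (X,C) :: (Y,B) :: (Z,B) :: l₂) < n := hb (X,C) (Y,B) (Z,B) (perm3_123 X Y Z) (perm3_312 B B C) (by simp only [muL_triple, hx1, he1, tZX, nXY, nYZ, nXZ, he2, nBC, lt_self_iff_false, if_true, if_false]; omega)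
    have e10 : red (S r (m₁ ++ (X,C) :: (Y,B) :: (Z,B) :: l₂)) = red (S r (m₁ ++ (X,C) :: (Z,B) :: (Y,B) :: l₂)) := by
      simpa only [List.append_assoc, List.cons_append, List.singleton_append, List.nil_append] using stepEq red hIH (m₁ ++ [(X,C)]) l₂ (Y,B) (Z,B) he1 rfl (by simpa only [List.append_assoc, List.cons_append, List.singleton_append, List.nil_append] using hw10)
    rw [e1, e2, e3, e4, e5, e6, e7, e8, e9, e10]
    try abel

end Star3

end SRaux

namespace SRaux

section Star4

variable {r : ℕ}
  (red : MonoidAlgebra (LaurentPolynomial ℤ) (Biword r) →ₗ[LaurentPolynomial ℤ]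
      MonoidAlgebra (LaurentPolynomial ℤ) (Biword r))

lemma starAll (hred : IsLeftmostReduction (SRrule (LaurentPolynomial ℤ) r) red) :
    ∀ n, StarP red n := by
  intro n
  induction n using Nat.strong_induction_on with
  | _ n IH =>
    intro l₁ c d E l₂ hE hmu
    rcases find_redex (l₁ ++ [c]) with hirr | ⟨m₁, p, q, m₂, heq, hch, hpq⟩
    · exact hred.map_step l₁ c d E l₂ hE ((irred_iff _).2 hirr)
    · rcases List.eq_nil_or_concat m₂ with rfl | ⟨m₂', a, rfl⟩
      · obtain ⟨rfl, hc⟩ : l₁ = m₁ ++ [p] ∧ [c] = [q] :=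
          List.append_inj' (by rw [heq]; simp) rfl
        simp only [List.cons.injEq, and_true] at hc
        subst hc
        have h := overlap_case red hred IH m₁ l₂ p c d E hch hpq hE (by simpa using hmu)
        simpa using h
      · obtain ⟨rfl, hc⟩ : l₁ = m₁ ++ p :: q :: m₂' ∧ [c] = [a] :=
          List.append_inj' (by rw [heq]; simp) rfl
        simp only [List.cons.injEq, and_true] at hc
        subst hc
        have h := disjoint_case red hred IH m₁ m₂' l₂ p q c d E hch hpq hE (by simpa using hmu)
        simpa using h

lemma main_aux (hred : IsLeftmostReduction (SRrule (LaurentPolynomial ℤ) r) red) :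
    ∀ n (β₂ : List (Biletter r)), muL β₂ ≤ n → ∀ β₁ β₃ : List (Biletter r),
      red (S r (β₁ ++ β₂ ++ β₃)) = red (S r β₁ * red (S r β₂) * S r β₃) := by
  intro n
  induction n using Nat.strong_induction_on with
  | _ n IH =>
    intro β₂ hmu β₁ β₃
    rcases find_redex β₂ with hirr | ⟨m₁, p, q, m₂, rfl, hch, hpq⟩
    · rw [show red (S r β₂) = S r β₂ from hred.map_irred β₂ ((irred_iff _).2 hirr),
        S_mul, S_mul]
    · obtain ⟨hx, hy⟩ := hpq
      have irr2 : IrredWord (SRrule (LaurentPolynomial ℤ) r) (m₁ ++ [p]) := (irred_iff _).2 hch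
      have hb1 : muL (m₁ ++ q :: p :: m₂) < n := lt_of_lt_of_le (mu_swap m₁ m₂ p q hx hy) hmu
      have i1 := IH _ hb1 (m₁ ++ q :: p :: m₂) le_rfl β₁ β₃
      rcases lt_or_eq_of_le hy with hy' | hy'
      · have hF := rule_lt p q hx hy'
        have h2 := hred.map_step m₁ p q _ m₂ hF irr2
        have h3 := starAll red hred (muL ((β₁ ++ m₁) ++ p :: q :: (m₂ ++ β₃)))
          (β₁ ++ m₁) p q _ (m₂ ++ β₃) hF le_rfl
        have hb2 : muL (m₁ ++ (q.1, p.2) :: (p.1, q.2) :: m₂) < n :=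
          lt_of_lt_of_le (mu_mid m₁ m₂ p q hx hy') hmu
        have hb3 : muL (m₁ ++ (p.1, q.2) :: (q.1, p.2) :: m₂) < n :=
          lt_of_lt_of_le (mu_third m₁ m₂ p q hx hy') hmu
        have i2 := IH _ hb2 (m₁ ++ (q.1, p.2) :: (p.1, q.2) :: m₂) le_rfl β₁ β₃
        have i3 := IH _ hb3 (m₁ ++ (p.1, q.2) :: (q.1, p.2) :: m₂) le_rfl β₁ β₃
        have h2' : red (S r (m₁ ++ p :: q :: m₂))
            = red (S r m₁ * (S r [q, p] + S r [(q.1, p.2), (p.1, q.2)]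
                - S r [(p.1, q.2), (q.1, p.2)]) * S r m₂) := h2
        rw [h2']
        simp only [mul_add, add_mul, mul_sub, sub_mul, map_add, map_sub, S_mul,
          List.append_assoc, List.cons_append, List.nil_append, List.singleton_append]
            at h3 i1 i2 i3 ⊢
        rw [h3, i1, i2, i3]
        try abel
      · have hF := rule_eq p q hx hy'.symm
        have h2 := hred.map_step m₁ p q _ m₂ hF irr2
        have h3 := starAll red hred (muL ((β₁ ++ m₁) ++ p :: q :: (m₂ ++ β₃)))
          (β₁ ++ m₁) p q _ (m₂ ++ β₃) hF le_rfl
        have h2' : red (S r (m₁ ++ p :: q :: m₂))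
            = red (S r m₁ * S r [q, p] * S r m₂) := h2
        rw [h2']
        simp only [mul_add, add_mul, mul_sub, sub_mul, map_add, map_sub, S_mul,
          List.append_assoc, List.cons_append, List.nil_append, List.singleton_append]
            at h3 i1 ⊢
        rw [h3, i1]

end Star4

end SRaux


/-- **Theorem 3** (Reduction-uniqueness).  The reduction system `(SR)` is
reduction-unique: for all biwords `β₁, β₂, β₃`,
`[β₁β₂β₃]_{SR} = [β₁ ⬝ [β₂]_{SR} ⬝ β₃]_{SR}`. -/
theorem SR_reduction_unique (r : ℕ)
    (red : MonoidAlgebra (LaurentPolynomial ℤ) (Biword r) →ₗ[LaurentPolynomial ℤ]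
      MonoidAlgebra (LaurentPolynomial ℤ) (Biword r))
    (hred : IsLeftmostReduction (SRrule (LaurentPolynomial ℤ) r) red)
    (β₁ β₂ β₃ : List (Biletter r)) :
    red (MonoidAlgebra.single (ofCols (β₁ ++ β₂ ++ β₃)) 1)
      = red (MonoidAlgebra.single (ofCols β₁) 1
          * red (MonoidAlgebra.single (ofCols β₂) 1)
          * MonoidAlgebra.single (ofCols β₃) 1) := SRaux.main_aux red hred (SRaux.muL β₂) β₂ le_rfl β₁ β₃
end
end

section
/- (The "1=q" principle, Theorem 4.) (i) For every element E of 𝒜_q one has φ([E]_{SR}) = [φ(E)]_{SR_q}. (ii) If E and F are circular expressions in 𝒜_q, then φ(E·F) = φ(E)·φ(F). -/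
/-!
Common framework: fix a positive integer `r`; the alphabet `A = {1,…,r}` is modelled
by `Fin r` (the letter `k ∈ A` corresponding to `⟨k-1, _⟩ : Fin r`, with the same
linear order).  A biword is a word in the free monoid on biletters (columns);
`MonoidAlgebra R (Biword r)` is the corresponding large algebra restricted to
finitely supported linear combinations of biwords.
-/

open LaurentPolynomial

noncomputable section

/-- Generators of the two-sided ideal `I(SR_q)`: `(xy over aa) − q⬝(yx over aa)` for
`x>y`, and `(xy over ab) − (yx over ba) − q⬝(yx over ab) + q⁻¹⬝(xy over ba)` for
`x>y`, `a>b`. -/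
def SRqgens (r : ℕ) : Set (MonoidAlgebra (LaurentPolynomial ℤ) (Biword r)) :=
  {E | (∃ x y a : Fin r, y < x ∧
          E = MonoidAlgebra.single (mkBW [x, y] [a, a]) 1
             - MonoidAlgebra.single (mkBW [y, x] [a, a]) (T 1)) ∨
       (∃ x y a b : Fin r, y < x ∧ b < a ∧
          E = MonoidAlgebra.single (mkBW [x, y] [a, b]) 1
             - MonoidAlgebra.single (mkBW [y, x] [b, a]) 1
             - MonoidAlgebra.single (mkBW [y, x] [a, b]) (T 1)
             + MonoidAlgebra.single (mkBW [x, y] [b, a]) (T (-1)))}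

/-- The reduction system `(SR_q)`: for `x>y`, `(xy over aa) → q⬝(yx over aa)`, and for
`x>y`, `a>b`, `(xy over ab) → (yx over ba) + q⬝(yx over ab) − q⁻¹⬝(xy over ba)`. -/
def SRqrule (r : ℕ) (c d : Biletter r) :
    Option (MonoidAlgebra (LaurentPolynomial ℤ) (Biword r)) :=
  if d.1 < c.1 then
    if c.2 = d.2 then some (MonoidAlgebra.single (ofCols [d, c]) (T 1))
    else if d.2 < c.2 then
      some (MonoidAlgebra.single (ofCols [d, c]) 1
        + MonoidAlgebra.single (ofCols [(d.1, c.2), (c.1, d.2)]) (T 1)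
        - MonoidAlgebra.single (ofCols [(c.1, d.2), (d.1, c.2)]) (T (-1)))
    else none
  else none

/-- The weight function `φ` of the "1=q" principle: `φ(α) = q^{inv⁻(α)} ⬝ α` on
biwords, extended by linearity. -/
def phi {r : ℕ} (E : MonoidAlgebra (LaurentPolynomial ℤ) (Biword r)) :
    MonoidAlgebra (LaurentPolynomial ℤ) (Biword r) :=
  Finsupp.sum E.coeff fun β c => MonoidAlgebra.single β (c * T (invMinus β))

/-! ### Auxiliary material for the proof -/

section Aux

abbrev Rq : Type := LaurentPolynomial ℤ

variable {r : ℕ}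

/-- Cross inversions between two words. -/
def cross (u v : List (Fin r)) : ℕ :=
  (u.map fun a => v.countP fun b => decide (b < a)).sum

lemma wordInv_append (u v : List (Fin r)) :
    wordInv (u ++ v) = wordInv u + wordInv v + cross u v := by
  induction u with
  | nil => simp [wordInv, cross]
  | cons a u ih =>
    simp only [List.cons_append, wordInv, List.append_eq, ih, List.countP_append, cross,
      List.map_cons, List.sum_cons]
    omega

lemma countP_swap (p : Fin r → Bool) (x y : Fin r) (B : List (Fin r)) :
    List.countP p (x :: y :: B) = List.countP p (y :: x :: B) := by
  simp only [List.countP_cons]; ring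

lemma wordInv_swap (A B : List (Fin r)) {x y : Fin r} (h : y < x) :
    wordInv (A ++ x :: y :: B) = wordInv (A ++ y :: x :: B) + 1 := by
  rw [wordInv_append, wordInv_append]
  have hc : cross A (x :: y :: B) = cross A (y :: x :: B) := by
    unfold cross
    congr 1
    exact List.map_congr_left fun a _ => countP_swap _ _ _ _
  have h2 : wordInv (x :: y :: B) = wordInv (y :: x :: B) + 1 := by
    simp only [wordInv, List.countP_cons, decide_eq_true_eq, h, if_true,
      not_lt.mpr h.le, if_false]
    omega
  omega

lemma cross_congr {u u' v v' : List (Fin r)} (hu : u.Perm u') (hv : v.Perm v') :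
    cross u v = cross u' v' := by
  unfold cross
  calc (u.map fun a => v.countP fun b => decide (b < a)).sum
      = (u.map fun a => v'.countP fun b => decide (b < a)).sum := by
        congr 1; exact List.map_congr_left fun a _ => hv.countP_eq _
    _ = (u'.map fun a => v'.countP fun b => decide (b < a)).sum :=
        (hu.map _).sum_eq

lemma invMinus_ofCols (l : List (Biletter r)) :
    invMinus (ofCols l) = (wordInv (l.map Prod.snd) : ℤ) - (wordInv (l.map Prod.fst) : ℤ) := rfl

lemma ofCols_toList (α : Biword r) : ofCols (FreeMonoid.toList α) = α := rfl

lemma invMinus_mul {α β : Biword r} (hα : IsCircuit α) (hβ : IsCircuit β) :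
    invMinus (α * β) = invMinus α + invMinus β := by
  unfold IsCircuit topWord botWord at hα hβ
  unfold invMinus topWord botWord
  have ht : FreeMonoid.toList (α * β) = FreeMonoid.toList α ++ FreeMonoid.toList β := rfl
  rw [ht, List.map_append, List.map_append, wordInv_append, wordInv_append,
    cross_congr hα hβ]
  push_cast
  ring

lemma phi_single (β : Biword r) (c : Rq) :
    phi (MonoidAlgebra.single β c) = MonoidAlgebra.single β (c * T (invMinus β)) := by
  unfold phi
  rw [MonoidAlgebra.coeff_single]
  exact Finsupp.sum_single_index (by rw [zero_mul]; exact MonoidAlgebra.single_zero _)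

lemma phi_zero : phi (0 : MonoidAlgebra Rq (Biword r)) = 0 := by
  unfold phi
  rw [MonoidAlgebra.coeff_zero]
  exact Finsupp.sum_zero_index

lemma phi_add (E F : MonoidAlgebra Rq (Biword r)) : phi (E + F) = phi E + phi F := by
  unfold phi
  rw [MonoidAlgebra.coeff_add]
  exact Finsupp.sum_add_index' (fun β => by rw [zero_mul]; exact MonoidAlgebra.single_zero _)
    (fun β c₁ c₂ => by rw [add_mul]; exact MonoidAlgebra.single_add _ _ _)

/-- `phi` as an additive monoid hom. -/
def phiH (r : ℕ) : MonoidAlgebra Rq (Biword r) →+ MonoidAlgebra Rq (Biword r) where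
  toFun := phi
  map_zero' := phi_zero
  map_add' := phi_add

lemma phi_eq (E : MonoidAlgebra Rq (Biword r)) : phi E = phiH r E := rfl

lemma phi_sub (E F : MonoidAlgebra Rq (Biword r)) : phi (E - F) = phi E - phi F := by
  rw [phi_eq, phi_eq, phi_eq, map_sub]

lemma phi_smul (c : Rq) (E : MonoidAlgebra Rq (Biword r)) : phi (c • E) = c • phi E := by
  unfold phi
  rw [MonoidAlgebra.coeff_smul, Finsupp.sum_smul_index (fun β => by rw [zero_mul]; exact MonoidAlgebra.single_zero _),
    Finsupp.smul_sum]
  exact Finsupp.sum_congr fun β _ => by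
    rw [MonoidAlgebra.smul_single', mul_assoc]

lemma phi_single_one (β : Biword r) :
    phi (MonoidAlgebra.single β (1 : Rq))
      = (T (invMinus β) : Rq) • (MonoidAlgebra.single β 1 : MonoidAlgebra Rq (Biword r)) := by
  rw [phi_single, one_mul, MonoidAlgebra.smul_single', mul_one]

lemma single_conj2 (l₁ l₂ : List (Biletter r)) (p q : Biletter r) (c : Rq) :
    MonoidAlgebra.single (ofCols l₁) (1 : Rq) * MonoidAlgebra.single (ofCols [p, q]) c *
      MonoidAlgebra.single (ofCols l₂) 1
    = MonoidAlgebra.single (ofCols (l₁ ++ p :: q :: l₂)) c := by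
  rw [MonoidAlgebra.single_mul_single, MonoidAlgebra.single_mul_single, one_mul, mul_one]
  congr 1
  apply FreeMonoid.toList.injective
  show (l₁ ++ [p, q]) ++ l₂ = l₁ ++ p :: q :: l₂
  simp

/-- The reducibility condition shared by `SRrule` and `SRqrule`. -/
def NR (c d : Biletter r) : Prop := ¬(d.1 < c.1 ∧ d.2 ≤ c.2)

lemma SRrule_none_iff (c d : Biletter r) : SRrule Rq r c d = none ↔ NR c d := by
  unfold SRrule NR
  split_ifs with h1 h2 h3
  · simp [h1, h2.ge]
  · simp [h1, h3.le]
  · have hne : ¬ d.2 ≤ c.2 := not_le.mpr (lt_of_le_of_ne (not_lt.mp h3) h2)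
    simp [hne]
  · simp [h1]

lemma SRqrule_none_iff (c d : Biletter r) : SRqrule r c d = none ↔ NR c d := by
  unfold SRqrule NR
  split_ifs with h1 h2 h3
  · simp [h1, h2.ge]
  · simp [h1, h3.le]
  · have hne : ¬ d.2 ≤ c.2 := not_le.mpr (lt_of_le_of_ne (not_lt.mp h3) h2)
    simp [hne]
  · simp [h1]

lemma irred_SR_iff (l : List (Biletter r)) :
    IrredWord (SRrule Rq r) l ↔ List.Chain' (fun c d : Biletter r => NR c d) l := by
  unfold IrredWord
  exact ⟨fun h => h.imp fun a b hab => (SRrule_none_iff a b).mp hab,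
    fun h => h.imp fun a b hab => (SRrule_none_iff a b).mpr hab⟩

lemma irred_SRq_iff (l : List (Biletter r)) :
    IrredWord (SRqrule r) l ↔ List.Chain' (fun c d : Biletter r => NR c d) l := by
  unfold IrredWord
  exact ⟨fun h => h.imp fun a b hab => (SRqrule_none_iff a b).mp hab,
    fun h => h.imp fun a b hab => (SRqrule_none_iff a b).mpr hab⟩

lemma exists_leftmost {α : Type} (P : α → α → Prop) :
    ∀ l : List α, ¬ List.Chain' (fun a b => ¬ P a b) l →
      ∃ l₁ c d l₂, l = l₁ ++ c :: d :: l₂ ∧ P c d ∧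
        List.Chain' (fun a b => ¬ P a b) (l₁ ++ [c]) := by
  intro l
  induction l with
  | nil => intro h; exact absurd List.isChain_nil h
  | cons c t ih =>
    cases t with
    | nil => intro h; exact absurd (List.isChain_singleton c) h
    | cons d t' =>
      intro h
      by_cases hcd : P c d
      · exact ⟨[], c, d, t', rfl, hcd, List.isChain_singleton c⟩
      · have h2 : ¬ List.Chain' (fun a b => ¬ P a b) (d :: t') := fun hc =>
          h (List.isChain_cons_cons.mpr ⟨hcd, hc⟩)
        obtain ⟨l₁, c', d', l₂, heq, hP, hch⟩ := ih h2
        refine ⟨c :: l₁, c', d', l₂, by simp [heq], hP, ?_⟩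
        rw [List.cons_append]; apply List.isChain_cons.mpr
        refine ⟨?_, hch⟩
        intro y hy
        have hhead : (l₁ ++ [c']).head? = some d := by
          cases l₁ with
          | nil =>
            simp only [List.nil_append] at heq
            injection heq with h1 _
            simp [h1]
          | cons a t'' =>
            simp only [List.cons_append] at heq
            injection heq with h1 _
            simp [h1]
        rw [hhead] at hy
        simp only [Option.mem_def, Option.some.injEq] at hy
        subst hy
        exact hcd

end Aux


/-- **Theorem 4** (the "1=q" principle).  (i) For every `E ∈ 𝒜_q`,
`φ([E]_{SR}) = [φ(E)]_{SR_q}`.  (ii) If `E` and `F` are circular expressions, then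
`φ(E ⬝ F) = φ(E) ⬝ φ(F)`. -/
theorem one_eq_q_principle (r : ℕ)
    (redSR redSRq : MonoidAlgebra (LaurentPolynomial ℤ) (Biword r) →ₗ[LaurentPolynomial ℤ]
      MonoidAlgebra (LaurentPolynomial ℤ) (Biword r))
    (h1 : IsLeftmostReduction (SRrule (LaurentPolynomial ℤ) r) redSR)
    (hq : IsLeftmostReduction (SRqrule r) redSRq) :
    (∀ E : MonoidAlgebra (LaurentPolynomial ℤ) (Biword r),
        phi (redSR E) = redSRq (phi E)) ∧
    (∀ E F : MonoidAlgebra (LaurentPolynomial ℤ) (Biword r),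
        IsCircular E → IsCircular F → phi (E * F) = phi E * phi F) := by
  classical
  have key : ∀ (t b : ℕ) (l : List (Biletter r)),
      wordInv (l.map Prod.fst) = t → wordInv (l.map Prod.snd) = b →
      phi (redSR (MonoidAlgebra.single (ofCols l) 1)) =
        redSRq (phi (MonoidAlgebra.single (ofCols l) 1)) := by
    intro t
    induction t using Nat.strong_induction_on with
    | _ t iht =>
    intro b
    induction b using Nat.strong_induction_on with
    | _ b ihb =>
    intro l ht hb
    by_cases hirr : List.Chain' (fun c d : Biletter r => ¬(d.1 < c.1 ∧ d.2 ≤ c.2)) l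
    · -- irreducible case
      have h1i : IrredWord (SRrule Rq r) l := (irred_SR_iff l).mpr hirr
      have hqi : IrredWord (SRqrule r) l := (irred_SRq_iff l).mpr hirr
      rw [h1.map_irred l h1i, phi_single_one, map_smul, hq.map_irred l hqi]
    · obtain ⟨l₁, c, d, l₂, rfl, hP, hch⟩ :=
        exists_leftmost (fun c d : Biletter r => d.1 < c.1 ∧ d.2 ≤ c.2) l hirr
      have hch1 : IrredWord (SRrule Rq r) (l₁ ++ [c]) := (irred_SR_iff _).mpr hch
      have hchq : IrredWord (SRqrule r) (l₁ ++ [c]) := (irred_SRq_iff _).mpr hch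
      simp only [List.map_append, List.map_cons] at ht hb
      have hswt := wordInv_swap (l₁.map Prod.fst) (l₂.map Prod.fst) hP.1
      rcases lt_or_eq_of_le hP.2 with hba | hba
      · -- strict case : d.2 < c.2
        have hswb := wordInv_swap (l₁.map Prod.snd) (l₂.map Prod.snd) hba
        have hr1 : SRrule Rq r c d = some
            (MonoidAlgebra.single (ofCols [d, c]) 1
              + MonoidAlgebra.single (ofCols [(d.1, c.2), (c.1, d.2)]) 1
              - MonoidAlgebra.single (ofCols [(c.1, d.2), (d.1, c.2)]) 1) := by
          unfold SRrule
          rw [if_pos hP.1, if_neg (ne_of_gt hba), if_pos hba]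
        have hrq : SRqrule r c d = some
            (MonoidAlgebra.single (ofCols [d, c]) 1
              + MonoidAlgebra.single (ofCols [(d.1, c.2), (c.1, d.2)]) (T 1)
              - MonoidAlgebra.single (ofCols [(c.1, d.2), (d.1, c.2)]) (T (-1))) := by
          unfold SRqrule
          rw [if_pos hP.1, if_neg (ne_of_gt hba), if_pos hba]
        have hstep1 := h1.map_step l₁ c d _ l₂ hr1 hch1
        have hstepq := hq.map_step l₁ c d _ l₂ hrq hchq
        rw [mul_sub, mul_add, sub_mul, add_mul, single_conj2, single_conj2, single_conj2,
          map_sub, map_add] at hstep1 hstepq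
        have ih1 : phi (redSR (MonoidAlgebra.single (ofCols (l₁ ++ d :: c :: l₂)) 1)) =
            redSRq (phi (MonoidAlgebra.single (ofCols (l₁ ++ d :: c :: l₂)) 1)) := by
          refine iht _ ?_ _ _ rfl rfl
          simp only [List.map_append, List.map_cons]
          omega
        have ih2 : phi (redSR (MonoidAlgebra.single
              (ofCols (l₁ ++ (d.1, c.2) :: (c.1, d.2) :: l₂)) 1)) =
            redSRq (phi (MonoidAlgebra.single
              (ofCols (l₁ ++ (d.1, c.2) :: (c.1, d.2) :: l₂)) 1)) := by
          refine iht _ ?_ _ _ rfl rfl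
          simp only [List.map_append, List.map_cons]
          omega
        have ih3 : phi (redSR (MonoidAlgebra.single
              (ofCols (l₁ ++ (c.1, d.2) :: (d.1, c.2) :: l₂)) 1)) =
            redSRq (phi (MonoidAlgebra.single
              (ofCols (l₁ ++ (c.1, d.2) :: (d.1, c.2) :: l₂)) 1)) := by
          refine ihb _ ?_ _ ?_ rfl
          · simp only [List.map_append, List.map_cons]
            omega
          · simp only [List.map_append, List.map_cons]
            omega
        have hk1 : invMinus (ofCols (l₁ ++ d :: c :: l₂)) =
            invMinus (ofCols (l₁ ++ c :: d :: l₂)) := by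
          simp only [invMinus_ofCols, List.map_append, List.map_cons]
          omega
        have hk2 : invMinus (ofCols (l₁ ++ (d.1, c.2) :: (c.1, d.2) :: l₂)) =
            invMinus (ofCols (l₁ ++ c :: d :: l₂)) + 1 := by
          simp only [invMinus_ofCols, List.map_append, List.map_cons]
          omega
        have hk3 : invMinus (ofCols (l₁ ++ (c.1, d.2) :: (d.1, c.2) :: l₂)) =
            invMinus (ofCols (l₁ ++ c :: d :: l₂)) + (-1) := by
          simp only [invMinus_ofCols, List.map_append, List.map_cons]
          omega
        have hm2 : (MonoidAlgebra.single (ofCols (l₁ ++ (d.1, c.2) :: (c.1, d.2) :: l₂))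
              (T 1) : MonoidAlgebra Rq (Biword r))
            = (T 1 : Rq) • MonoidAlgebra.single
                (ofCols (l₁ ++ (d.1, c.2) :: (c.1, d.2) :: l₂)) 1 := by
          rw [MonoidAlgebra.smul_single', mul_one]
        have hm3 : (MonoidAlgebra.single (ofCols (l₁ ++ (c.1, d.2) :: (d.1, c.2) :: l₂))
              (T (-1)) : MonoidAlgebra Rq (Biword r))
            = (T (-1) : Rq) • MonoidAlgebra.single
                (ofCols (l₁ ++ (c.1, d.2) :: (d.1, c.2) :: l₂)) 1 := by
          rw [MonoidAlgebra.smul_single', mul_one]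
        rw [hstep1, phi_sub, phi_add, ih1, ih2, ih3]
        rw [phi_single_one, phi_single_one, phi_single_one, phi_single_one]
        rw [map_smul, map_smul, map_smul, map_smul]
        rw [hstepq, hm2, hm3, map_smul, map_smul]
        rw [smul_sub, smul_add, smul_smul, smul_smul, ← T_add, ← T_add, hk1, hk2, hk3]
      · -- equal case : d.2 = c.2
        have hr1 : SRrule Rq r c d = some
            (MonoidAlgebra.single (ofCols [d, c]) (1 : Rq)) := by
          unfold SRrule
          rw [if_pos hP.1, if_pos hba.symm]
        have hrq : SRqrule r c d = some
            (MonoidAlgebra.single (ofCols [d, c]) (T 1)) := by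
          unfold SRqrule
          rw [if_pos hP.1, if_pos hba.symm]
        have hstep1 := h1.map_step l₁ c d _ l₂ hr1 hch1
        have hstepq := hq.map_step l₁ c d _ l₂ hrq hchq
        rw [single_conj2] at hstep1 hstepq
        have ih1 : phi (redSR (MonoidAlgebra.single (ofCols (l₁ ++ d :: c :: l₂)) 1)) =
            redSRq (phi (MonoidAlgebra.single (ofCols (l₁ ++ d :: c :: l₂)) 1)) := by
          refine iht _ ?_ _ _ rfl rfl
          simp only [List.map_append, List.map_cons]
          omega
        have hk1 : invMinus (ofCols (l₁ ++ d :: c :: l₂)) =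
            invMinus (ofCols (l₁ ++ c :: d :: l₂)) + 1 := by
          simp only [invMinus_ofCols, List.map_append, List.map_cons, hba]
          omega
        have hm1 : (MonoidAlgebra.single (ofCols (l₁ ++ d :: c :: l₂))
              (T 1) : MonoidAlgebra Rq (Biword r))
            = (T 1 : Rq) • MonoidAlgebra.single (ofCols (l₁ ++ d :: c :: l₂)) 1 := by
          rw [MonoidAlgebra.smul_single', mul_one]
        rw [hstep1, ih1, phi_single_one, phi_single_one, map_smul, map_smul,
          hstepq, hm1, map_smul, smul_smul, ← T_add, hk1]
  constructor
  · -- part (i)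
    intro E
    induction E using MonoidAlgebra.induction_linear with
    | zero => rw [map_zero, phi_zero, map_zero]
    | add f g hf hg => rw [map_add, phi_add, hf, hg, phi_add, map_add]
    | single β co =>
      show phi (redSR (MonoidAlgebra.single β co)) = redSRq (phi (MonoidAlgebra.single β co))
      have hco : (MonoidAlgebra.single β co : MonoidAlgebra Rq (Biword r))
          = co • MonoidAlgebra.single β 1 := by
        rw [MonoidAlgebra.smul_single', mul_one]
      rw [hco, map_smul, phi_smul, phi_smul, map_smul]
      congr 1
      have h := key (wordInv ((FreeMonoid.toList β).map Prod.fst))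
        (wordInv ((FreeMonoid.toList β).map Prod.snd)) (FreeMonoid.toList β) rfl rfl
      simpa [ofCols_toList] using h
  · -- part (ii)
    intro E F hE hF
    have expand : phi (E * F) = Finsupp.sum E.coeff fun α a => Finsupp.sum F.coeff fun β b =>
        MonoidAlgebra.single (α * β) (a * b * T (invMinus (α * β))) := by
      rw [MonoidAlgebra.mul_def, phi_eq, map_finsuppSum]
      refine Finsupp.sum_congr fun α _ => ?_
      rw [map_finsuppSum]
      exact Finsupp.sum_congr fun β _ => by rw [← phi_eq, phi_single]
    have expand2 : phi E * phi F = Finsupp.sum E.coeff fun α a => Finsupp.sum F.coeff fun β b =>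
        MonoidAlgebra.single (α * β) ((a * T (invMinus α)) * (b * T (invMinus β))) := by
      unfold phi
      rw [Finsupp.sum_mul]
      refine Finsupp.sum_congr fun α _ => ?_
      rw [Finsupp.mul_sum]
      exact Finsupp.sum_congr fun β _ => by rw [MonoidAlgebra.single_mul_single]
    rw [expand, expand2]
    refine Finsupp.sum_congr fun α hα => Finsupp.sum_congr fun β hβ => ?_
    rw [invMinus_mul (hE α hα) (hF β hβ), T_add]
    congr 1
    ring
end
end

section
/- (The "1=q" principle for the Cartier–Foata algebra, Theorem 4F.) (i) For every element E of 𝒜_{t,q} one has φ_SF([E]_{SF}) = [φ_SF(E)]_{SF_q}. (ii) If E and F are circular expressions in 𝒜_{t,q}, then φ_SF(E·F) = φ_SF(E)·φ_SF(F). -/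
/-!
Common framework: fix a positive integer `r`; the alphabet `A = {1,…,r}` is modelled
by `Fin r` (the letter `k ∈ A` corresponding to `⟨k-1, _⟩ : Fin r`, with the same
linear order).  A biword is a word in the free monoid on biletters (columns);
`MonoidAlgebra R (Biword r)` is the corresponding large algebra restricted to
finitely supported linear combinations of biwords.
-/

open LaurentPolynomial

noncomputable section

/-- The reduction system `(SF)` (Cartier–Foata): `(xy over ab) → (yx over ba)` for all
`x>y` and all `a, b`. -/
def SFrule (R : Type) [CommRing R] (r : ℕ) (c d : Biletter r) :
    Option (MonoidAlgebra R (Biword r)) :=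
  if d.1 < c.1 then some (MonoidAlgebra.single (ofCols [d, c]) 1) else none

/-- The reduction system `(SF_q)` over `ℤ[t,t⁻¹,q,q⁻¹]`: for `x>y`,
`(xy over ab) → (yx over ba)` if `a>b`, `(xy over aa) → q⬝(yx over aa)`, and
`(xy over ab) → q²⬝(yx over ba)` if `a<b`. -/
def SFqrule (r : ℕ) (c d : Biletter r) : Option (MonoidAlgebra Rtq (Biword r)) :=
  if d.1 < c.1 then
    if d.2 < c.2 then some (MonoidAlgebra.single (ofCols [d, c]) 1)
    else if c.2 = d.2 then some (MonoidAlgebra.single (ofCols [d, c]) qv)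
    else some (MonoidAlgebra.single (ofCols [d, c]) (qv ^ 2))
  else none

/-- Generators of the two-sided ideal `I(SF_q)` of `𝒜_{t,q}`: for `x>y`,
`(xy over ab) − (yx over ba)` if `a>b`, `(xy over aa) − q⬝(yx over aa)`, and
`(xy over ab) − q²⬝(yx over ba)` if `a<b`. -/
def SFqgens (r : ℕ) : Set (MonoidAlgebra Rtq (Biword r)) :=
  {E | (∃ x y a b : Fin r, y < x ∧ b < a ∧
          E = MonoidAlgebra.single (mkBW [x, y] [a, b]) 1
             - MonoidAlgebra.single (mkBW [y, x] [b, a]) 1) ∨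
       (∃ x y a : Fin r, y < x ∧
          E = MonoidAlgebra.single (mkBW [x, y] [a, a]) 1
             - MonoidAlgebra.single (mkBW [y, x] [a, a]) qv) ∨
       (∃ x y a b : Fin r, y < x ∧ a < b ∧
          E = MonoidAlgebra.single (mkBW [x, y] [a, b]) 1
             - MonoidAlgebra.single (mkBW [y, x] [b, a]) (qv ^ 2))}

/-- The weight function `φ_SF`: `φ_SF(α) = t^{exc(α)} q^{inv⁻(α)} ⬝ α` on biwords,
extended by linearity. -/
def phiSF {r : ℕ} (E : MonoidAlgebra Rtq (Biword r)) : MonoidAlgebra Rtq (Biword r) :=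
  Finsupp.sum E.coeff fun β c =>
    MonoidAlgebra.single β (c * tpow (excBW β) * qpow (invMinus β))

namespace OneEqQAux

open MonoidAlgebra

variable {r : ℕ}

/-- The weight of a biword. -/
def wht (β : Biword r) : Rtq := tpow (excBW β) * qpow (invMinus β)

/-- `phiSF` as a linear map. -/
def phiL (r : ℕ) : MonoidAlgebra Rtq (Biword r) →ₗ[Rtq] MonoidAlgebra Rtq (Biword r) :=
  (Finsupp.lsum Rtq fun β =>
    { toFun := fun c => MonoidAlgebra.single β (c * wht β)
      map_add' := fun x y => by simp only [add_mul, MonoidAlgebra.single_add]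
      map_smul' := fun m x => by
        simp only [smul_eq_mul, RingHom.id_apply, mul_assoc]
        rw [MonoidAlgebra.smul_single'] }) ∘ₗ
    (MonoidAlgebra.coeffLinearEquiv Rtq).toLinearMap

lemma phiL_apply (E : MonoidAlgebra Rtq (Biword r)) :
    phiL r E = E.coeff.sum fun β c => MonoidAlgebra.single β (c * wht β) := by
  rfl

lemma phiL_single (β : Biword r) (c : Rtq) :
    phiL r (MonoidAlgebra.single β c) = MonoidAlgebra.single β (c * wht β) := by
  rw [phiL_apply]
  exact Finsupp.sum_single_index (by simp)

lemma phiSF_eq (E : MonoidAlgebra Rtq (Biword r)) : phiSF E = phiL r E := by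
  rw [phiL_apply, phiSF]
  exact Finsupp.sum_congr fun β _ => by rw [wht, mul_assoc]

lemma wordInv_cons (a : Fin r) (l : List (Fin r)) :
    wordInv (a :: l) = l.countP (fun b => decide (b < a)) + wordInv l := rfl

/-- Cross inversions between two words. -/
def crossInv (u v : List (Fin r)) : ℕ :=
  (u.map fun a => v.countP fun b => decide (b < a)).sum

lemma wordInv_append (u v : List (Fin r)) :
    wordInv (u ++ v) = wordInv u + wordInv v + crossInv u v := by
  induction u with
  | nil => simp [wordInv, crossInv]
  | cons a u ih =>
    rw [List.cons_append, wordInv_cons, wordInv_cons, List.countP_append, ih]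
    simp only [crossInv, List.map_cons, List.sum_cons]
    omega

lemma crossInv_perm_left {u u' : List (Fin r)} (h : u.Perm u') (v : List (Fin r)) :
    crossInv u v = crossInv u' v :=
  List.Perm.sum_eq (h.map _)

lemma crossInv_perm_right (u : List (Fin r)) {v v' : List (Fin r)} (h : v.Perm v') :
    crossInv u v = crossInv u v' := by
  unfold crossInv
  exact congrArg List.sum (List.map_congr_left fun a _ => h.countP_eq _)

lemma wordInv_swap (u v : List (Fin r)) {x y : Fin r} (h : y < x) :
    wordInv (u ++ x :: y :: v) = wordInv (u ++ y :: x :: v) + 1 := by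
  rw [wordInv_append, wordInv_append,
      crossInv_perm_right u (List.Perm.swap x y v).symm]
  have hxy : ¬ x < y := not_lt.mpr h.le
  simp only [wordInv_cons, List.countP_cons]
  simp [h, hxy]
  omega

lemma topWord_ofCols (l : List (Biletter r)) :
    topWord (ofCols l) = l.map Prod.fst := rfl

lemma botWord_ofCols (l : List (Biletter r)) :
    botWord (ofCols l) = l.map Prod.snd := rfl

lemma excBW_ofCols (l : List (Biletter r)) :
    excBW (ofCols l) = l.countP (fun p => decide (p.2 < p.1)) := rfl

/-- The `q`-coefficient of the `(SF_q)` rule for `c, d`. -/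
def qfac (c d : Biletter r) : Rtq :=
  if d.2 < c.2 then 1 else if c.2 = d.2 then qv else qv ^ 2

/-- The change of `inv⁻` along one step. -/
def qdelta (c d : Biletter r) : ℤ :=
  if d.2 < c.2 then 0 else if c.2 = d.2 then 1 else 2

lemma qfac_eq (c d : Biletter r) : qfac c d = qpow (qdelta c d) := by
  unfold qfac qdelta qpow qv
  split_ifs
  · rw [LaurentPolynomial.T_zero]
  · rfl
  · rw [LaurentPolynomial.T_pow]
    norm_num

lemma excBW_step (l₁ l₂ : List (Biletter r)) (c d : Biletter r) :
    excBW (ofCols (l₁ ++ d :: c :: l₂)) = excBW (ofCols (l₁ ++ c :: d :: l₂)) := by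
  rw [excBW_ofCols, excBW_ofCols, List.countP_append, List.countP_append,
      List.countP_cons, List.countP_cons, List.countP_cons, List.countP_cons]
  omega

lemma invMinus_step (l₁ l₂ : List (Biletter r)) (c d : Biletter r) (h : d.1 < c.1) :
    invMinus (ofCols (l₁ ++ d :: c :: l₂)) =
      invMinus (ofCols (l₁ ++ c :: d :: l₂)) + qdelta c d := by
  unfold invMinus qdelta
  rw [topWord_ofCols, topWord_ofCols, botWord_ofCols, botWord_ofCols]
  simp only [List.map_append, List.map_cons]
  have htop := wordInv_swap (l₁.map Prod.fst) (l₂.map Prod.fst) h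
  rcases lt_trichotomy d.2 c.2 with hb | hb | hb
  · have hbot := wordInv_swap (l₁.map Prod.snd) (l₂.map Prod.snd) hb
    rw [if_pos hb]
    omega
  · rw [if_neg (by omega), if_pos hb.symm, hb]
    omega
  · have hbot := wordInv_swap (l₁.map Prod.snd) (l₂.map Prod.snd) hb
    rw [if_neg (by omega), if_neg (by omega)]
    omega

lemma wht_step (l₁ l₂ : List (Biletter r)) (c d : Biletter r) (h : d.1 < c.1) :
    wht (ofCols (l₁ ++ d :: c :: l₂)) = wht (ofCols (l₁ ++ c :: d :: l₂)) * qfac c d := by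
  rw [wht, wht, qfac_eq, excBW_step l₁ l₂ c d, invMinus_step l₁ l₂ c d h, qpow, qpow, qpow,
      LaurentPolynomial.T_add]
  ring

lemma SFrule_none_iff (c d : Biletter r) : SFrule Rtq r c d = none ↔ c.1 ≤ d.1 := by
  rw [SFrule]
  split_ifs with h
  · simp [not_le.mpr h]
  · simp [not_lt.mp h]

lemma SFqrule_none_iff (c d : Biletter r) : SFqrule r c d = none ↔ c.1 ≤ d.1 := by
  rw [SFqrule]
  split_ifs with h h1 h2 <;> simp <;> omega

lemma irred_iff {R : Type} [CommRing R]
    (rule : Biletter r → Biletter r → Option (MonoidAlgebra R (Biword r)))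
    (hrule : ∀ c d, rule c d = none ↔ c.1 ≤ d.1) (l : List (Biletter r)) :
    IrredWord rule l ↔ List.Chain' (fun c d : Biletter r => c.1 ≤ d.1) l := by
  constructor
  · exact List.IsChain.imp fun c d hcd => (hrule c d).1 hcd
  · exact List.IsChain.imp fun c d hcd => (hrule c d).2 hcd

lemma decomp (l : List (Biletter r)) :
    List.Chain' (fun c d : Biletter r => c.1 ≤ d.1) l ∨
    ∃ l₁ c d l₂, l = l₁ ++ c :: d :: l₂ ∧ d.1 < c.1 ∧
      List.Chain' (fun c d : Biletter r => c.1 ≤ d.1) (l₁ ++ [c]) := by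
  induction l with
  | nil => exact Or.inl List.isChain_nil
  | cons a l ih =>
    cases l with
    | nil => exact Or.inl (List.isChain_singleton a)
    | cons b t =>
      rcases lt_or_ge b.1 a.1 with h | h
      · exact Or.inr ⟨[], a, b, t, rfl, h, List.isChain_singleton a⟩
      · rcases ih with hch' | ⟨l₁, c, d, l₂, heq, hlt, hch⟩
        · exact Or.inl (List.isChain_cons_cons.mpr ⟨h, hch'⟩)
        · refine Or.inr ⟨a :: l₁, c, d, l₂, by rw [List.cons_append, heq], hlt, ?_⟩
          rw [List.cons_append]
          refine List.IsChain.cons hch ?_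
          intro y hy
          cases l₁ with
          | nil =>
            simp only [List.nil_append] at heq hy
            injection heq with h1 h2
            simp only [List.head?_cons, Option.mem_some_iff] at hy
            subst hy
            rw [← h1]
            exact h
          | cons e l₁' =>
            simp only [List.cons_append] at heq hy
            injection heq with h1 h2
            simp only [List.head?_cons, Option.mem_some_iff] at hy
            subst hy
            rw [← h1]
            exact h

lemma triple_single (u v w : List (Biletter r)) (b : Rtq) :
    MonoidAlgebra.single (ofCols u) (1 : Rtq) * MonoidAlgebra.single (ofCols v) b *
      MonoidAlgebra.single (ofCols w) 1 =
        MonoidAlgebra.single (ofCols (u ++ v ++ w)) b := by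
  rw [MonoidAlgebra.single_mul_single, MonoidAlgebra.single_mul_single, one_mul, mul_one]
  rfl

lemma single_eq_smul (β : Biword r) (c : Rtq) :
    (MonoidAlgebra.single β c : MonoidAlgebra Rtq (Biword r)) =
      c • MonoidAlgebra.single β 1 := by
  rw [MonoidAlgebra.smul_single', mul_one]

section Core

variable (redSF redSFq : MonoidAlgebra Rtq (Biword r) →ₗ[Rtq] MonoidAlgebra Rtq (Biword r))
variable (h1 : IsLeftmostReduction (SFrule Rtq r) redSF)
variable (hq : IsLeftmostReduction (SFqrule r) redSFq)

include h1 hq in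
lemma chain_case (l : List (Biletter r))
    (hch : List.Chain' (fun c d : Biletter r => c.1 ≤ d.1) l) :
    phiL r (redSF (MonoidAlgebra.single (ofCols l) 1)) =
      redSFq (phiL r (MonoidAlgebra.single (ofCols l) 1)) := by
  rw [h1.map_irred l ((irred_iff _ SFrule_none_iff l).2 hch), phiL_single,
      single_eq_smul (ofCols l) (1 * wht (ofCols l)), map_smul,
      hq.map_irred l ((irred_iff _ SFqrule_none_iff l).2 hch)]

include h1 hq in
lemma core : ∀ (n : ℕ) (l : List (Biletter r)), wordInv (l.map Prod.fst) ≤ n →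
    phiL r (redSF (MonoidAlgebra.single (ofCols l) 1)) =
      redSFq (phiL r (MonoidAlgebra.single (ofCols l) 1)) := by
  intro n
  induction n with
  | zero =>
    intro l hl
    rcases decomp l with hch | ⟨l₁, c, d, l₂, heq, hlt, hch⟩
    · exact chain_case redSF redSFq h1 hq l hch
    · exfalso
      subst heq
      have := wordInv_swap (l₁.map Prod.fst) (l₂.map Prod.fst) hlt
      simp only [List.map_append, List.map_cons] at hl
      omega
  | succ n ih =>
    intro l hl
    rcases decomp l with hch | ⟨l₁, c, d, l₂, heq, hlt, hch⟩
    · exact chain_case redSF redSFq h1 hq l hch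
    · subst heq
      have hrule1 : SFrule Rtq r c d =
          some (MonoidAlgebra.single (ofCols [d, c]) (1 : Rtq)) := by
        rw [SFrule, if_pos hlt]
      have hruleq : SFqrule r c d =
          some (MonoidAlgebra.single (ofCols [d, c]) (qfac c d)) := by
        rw [SFqrule, if_pos hlt]
        unfold qfac
        split_ifs <;> rfl
      have hirr1 : IrredWord (SFrule Rtq r) (l₁ ++ [c]) :=
        (irred_iff _ SFrule_none_iff _).2 hch
      have hirrq : IrredWord (SFqrule r) (l₁ ++ [c]) :=
        (irred_iff _ SFqrule_none_iff _).2 hch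
      have hlisteq : l₁ ++ [d, c] ++ l₂ = l₁ ++ d :: c :: l₂ := by simp
      have e1 : redSF (MonoidAlgebra.single (ofCols (l₁ ++ c :: d :: l₂)) 1)
          = redSF (MonoidAlgebra.single (ofCols (l₁ ++ d :: c :: l₂)) 1) := by
        rw [h1.map_step l₁ c d _ l₂ hrule1 hirr1, triple_single, hlisteq]
      have eq1 : redSFq (MonoidAlgebra.single (ofCols (l₁ ++ c :: d :: l₂)) 1)
          = qfac c d • redSFq (MonoidAlgebra.single (ofCols (l₁ ++ d :: c :: l₂)) 1) := by
        rw [hq.map_step l₁ c d _ l₂ hruleq hirrq, triple_single, hlisteq,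
            single_eq_smul, map_smul]
      have hinv : wordInv ((l₁ ++ d :: c :: l₂).map Prod.fst) ≤ n := by
        have := wordInv_swap (l₁.map Prod.fst) (l₂.map Prod.fst) hlt
        simp only [List.map_append, List.map_cons] at hl ⊢
        omega
      rw [e1, ih _ hinv, phiL_single, phiL_single, one_mul, one_mul,
          single_eq_smul (ofCols (l₁ ++ d :: c :: l₂)) (wht (ofCols (l₁ ++ d :: c :: l₂))),
          single_eq_smul (ofCols (l₁ ++ c :: d :: l₂)) (wht (ofCols (l₁ ++ c :: d :: l₂))),
          map_smul, map_smul, eq1, smul_smul, wht_step l₁ l₂ c d hlt]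

include h1 hq in
lemma part1_single (β : Biword r) (b : Rtq) :
    phiL r (redSF (MonoidAlgebra.single β b)) = redSFq (phiL r (MonoidAlgebra.single β b)) := by
  rw [single_eq_smul β b, map_smul, map_smul, map_smul, map_smul]
  have hβ : β = ofCols (FreeMonoid.toList β) := rfl
  rw [hβ]
  exact congrArg _
    (core redSF redSFq h1 hq (wordInv ((FreeMonoid.toList β).map Prod.fst)) _ le_rfl)

include h1 hq in
lemma part1 (E : MonoidAlgebra Rtq (Biword r)) :
    phiL r (redSF E) = redSFq (phiL r E) := by
  induction E using MonoidAlgebra.induction_linear with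
  | zero => simp
  | add f g hf hg => rw [map_add, map_add, map_add, map_add, hf, hg]
  | single β b => exact part1_single redSF redSFq h1 hq β b

end Core

lemma wht_mul (α β : Biword r) (hα : IsCircuit α) (hβ : IsCircuit β) :
    wht (α * β) = wht α * wht β := by
  have hexc : excBW (α * β) = excBW α + excBW β := by
    rw [excBW, excBW, excBW, FreeMonoid.toList_mul, List.countP_append]
  have htop : topWord (α * β) = topWord α ++ topWord β := by
    rw [topWord, topWord, topWord, FreeMonoid.toList_mul, List.map_append]
  have hbot : botWord (α * β) = botWord α ++ botWord β := by
    rw [botWord, botWord, botWord, FreeMonoid.toList_mul, List.map_append]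
  have hinv : invMinus (α * β) = invMinus α + invMinus β := by
    unfold invMinus
    rw [htop, hbot, wordInv_append, wordInv_append,
        crossInv_perm_left hα (topWord β), crossInv_perm_right (botWord α) hβ]
    push_cast
    ring
  rw [wht, wht, wht, hexc, hinv, tpow, tpow, tpow, qpow, qpow, qpow,
      Nat.cast_add, LaurentPolynomial.T_add, map_mul, LaurentPolynomial.T_add]
  ring

lemma part2 (E F : MonoidAlgebra Rtq (Biword r))
    (hE : IsCircular E) (hF : IsCircular F) :
    phiL r (E * F) = phiL r E * phiL r F := by
  rw [MonoidAlgebra.mul_def, map_finsuppSum, phiL_apply E, phiL_apply F,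
      Finsupp.sum_mul]
  refine Finsupp.sum_congr fun a ha => ?_
  rw [map_finsuppSum, Finsupp.mul_sum]
  refine Finsupp.sum_congr fun a' ha' => ?_
  rw [phiL_single, MonoidAlgebra.single_mul_single, wht_mul a a' (hE a ha) (hF a' ha')]
  exact congrArg _ (by ring)

end OneEqQAux

/-- **Theorem 4F** (the "1=q" principle for the Cartier–Foata algebra).
(i) For every `E ∈ 𝒜_{t,q}`, `φ_SF([E]_{SF}) = [φ_SF(E)]_{SF_q}`.  (ii) If `E` and
`F` are circular expressions, then `φ_SF(E ⬝ F) = φ_SF(E) ⬝ φ_SF(F)`. -/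
theorem one_eq_q_principle_CartierFoata (r : ℕ)
    (redSF redSFq : MonoidAlgebra Rtq (Biword r) →ₗ[Rtq] MonoidAlgebra Rtq (Biword r))
    (h1 : IsLeftmostReduction (SFrule Rtq r) redSF)
    (hq : IsLeftmostReduction (SFqrule r) redSFq) :
    (∀ E : MonoidAlgebra Rtq (Biword r), phiSF (redSF E) = redSFq (phiSF E)) ∧
    (∀ E F : MonoidAlgebra Rtq (Biword r),
        IsCircular E → IsCircular F → phiSF (E * F) = phiSF E * phiSF F) := by
  constructor
  · intro E
    rw [OneEqQAux.phiSF_eq, OneEqQAux.phiSF_eq]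
    exact OneEqQAux.part1 redSF redSFq h1 hq E
  · intro E F hE hF
    rw [OneEqQAux.phiSF_eq, OneEqQAux.phiSF_eq, OneEqQAux.phiSF_eq]
    exact OneEqQAux.part2 E F hE hF
end
end

section
/- (Proposition 5: the contextual algebra is a subalgebra of the 1-right quantum algebra.) Every generator of the ideal I(SR) lies in the ideal I(SH); consequently I(SR) ⊆ I(SH). In particular, for all x>y and all a,b in A, the element (xy over ab) − (yx over ba) − (yx over ab) + (xy over ba) belongs to I(SH), and for all x>y and all a the element (xy over aa) − (yx over aa) belongs to I(SH). -/
/-!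
Common framework: fix a positive integer `r`; the alphabet `A = {1,…,r}` is modelled
by `Fin r` (the letter `k ∈ A` corresponding to `⟨k-1, _⟩ : Fin r`, with the same
linear order).  A biword is a word in the free monoid on biletters (columns);
`MonoidAlgebra R (Biword r)` is the corresponding large algebra restricted to
finitely supported linear combinations of biwords.
-/

open LaurentPolynomial

noncomputable section

/-- `V(x,y,a,b) = (a−x−1/2)(a−y−1/2)(b−x−1/2)(b−y−1/2)` (it depends only on the
differences of the letters, hence is insensitive to the 0-based re-indexing). -/
def V {r : ℕ} (x y a b : Fin r) : ℚ :=
  ((a.val : ℚ) - x.val - 1/2) * ((a.val : ℚ) - y.val - 1/2) *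
    ((b.val : ℚ) - x.val - 1/2) * ((b.val : ℚ) - y.val - 1/2)

/-- Generators of the two-sided ideal `I(SH)`: `(xy over ab) − (yx over ab)` for `x>y`
with `V(x,y,a,b) > 0`, and `(xy over ab) − (yx over ba)` for `x>y` with
`V(x,y,a,b) < 0`. -/
def SHgens (r : ℕ) : Set (MonoidAlgebra ℤ (Biword r)) :=
  {E | (∃ x y a b : Fin r, y < x ∧ 0 < V x y a b ∧
          E = MonoidAlgebra.single (mkBW [x, y] [a, b]) 1
             - MonoidAlgebra.single (mkBW [y, x] [a, b]) 1) ∨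
       (∃ x y a b : Fin r, y < x ∧ V x y a b < 0 ∧
          E = MonoidAlgebra.single (mkBW [x, y] [a, b]) 1
             - MonoidAlgebra.single (mkBW [y, x] [b, a]) 1)}

/-- The reduction system `(SH)`, whose right-hand sides are single biwords:
for `x>y`, `(xy over ab) → (yx over ab)` if `V(x,y,a,b) > 0` and
`(xy over ab) → (yx over ba)` if `V(x,y,a,b) < 0` (`V` never vanishes). -/
def SHrulePair (r : ℕ) (c d : Biletter r) : Option (Biletter r × Biletter r) :=
  if d.1 < c.1 then
    if 0 < V c.1 d.1 c.2 d.2 then some ((d.1, c.2), (c.1, d.2))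
    else some (d, c)
  else none

/-- The reduction system `(SH)`, with right-hand sides in the biword algebra over `ℤ`. -/
def SHrule (r : ℕ) (c d : Biletter r) : Option (MonoidAlgebra ℤ (Biword r)) :=
  (SHrulePair r c d).map fun p => MonoidAlgebra.single (ofCols [p.1, p.2]) 1

/-- An `(SH)`-rewriting step at position `(i, i+1)` (1-based): replace the length-2
factor of the biword occupying columns `i` and `i+1`, when it is a left-hand side
of `(SH)`, by the corresponding right-hand side. -/
def SHstepAt (r : ℕ) (i : ℕ) (β β' : List (Biletter r)) : Prop :=
  ∃ (l₁ : List (Biletter r)) (c d e f : Biletter r) (l₂ : List (Biletter r)),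
    l₁.length + 1 = i ∧ SHrulePair r c d = some (e, f) ∧
    β = l₁ ++ c :: d :: l₂ ∧ β' = l₁ ++ e :: f :: l₂

lemma half_ne (m n : ℕ) : ((m : ℚ) - n - 1/2) ≠ 0 := by
  intro h
  have h2 : ((2 * m : ℤ) : ℚ) - ((2 * n : ℤ) : ℚ) = 1 := by push_cast; linarith
  have h3 : (2 * m : ℤ) - 2 * n = 1 := by exact_mod_cast h2
  omega

lemma V_ne_zero {r : ℕ} (x y a b : Fin r) : V x y a b ≠ 0 := by
  unfold V
  exact mul_ne_zero (mul_ne_zero (mul_ne_zero (half_ne _ _) (half_ne _ _)) (half_ne _ _))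
    (half_ne _ _)

lemma V_symm {r : ℕ} (x y a b : Fin r) : V x y b a = V x y a b := by
  unfold V; ring

lemma V_diag_pos {r : ℕ} (x y a : Fin r) : 0 < V x y a a := by
  have h : V x y a a
      = (((a.val : ℚ) - x.val - 1/2) * ((a.val : ℚ) - y.val - 1/2)) ^ 2 := by
    unfold V; ring
  rw [h]
  have hne : ((a.val : ℚ) - x.val - 1/2) * ((a.val : ℚ) - y.val - 1/2) ≠ 0 :=
    mul_ne_zero (half_ne _ _) (half_ne _ _)
  exact lt_of_le_of_ne (sq_nonneg _) (Ne.symm (pow_ne_zero 2 hne))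

lemma key_mem {r : ℕ} (x y a b : Fin r) (h : y < x) :
    MonoidAlgebra.single (mkBW [x, y] [a, b]) 1
      - MonoidAlgebra.single (mkBW [y, x] [b, a]) 1
      - MonoidAlgebra.single (mkBW [y, x] [a, b]) 1
      + MonoidAlgebra.single (mkBW [x, y] [b, a]) (1 : ℤ)
      ∈ TwoSidedIdeal.span (SHgens r) := by
  rcases lt_or_gt_of_ne (V_ne_zero x y a b) with hV | hV
  · -- V < 0 : use (xy/ab) − (yx/ba) and (xy/ba) − (yx/ab)
    have h1 : MonoidAlgebra.single (mkBW [x, y] [a, b]) (1 : ℤ)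
        - MonoidAlgebra.single (mkBW [y, x] [b, a]) 1 ∈ TwoSidedIdeal.span (SHgens r) :=
      TwoSidedIdeal.subset_span (Or.inr ⟨x, y, a, b, h, hV, rfl⟩)
    have h2 : MonoidAlgebra.single (mkBW [x, y] [b, a]) (1 : ℤ)
        - MonoidAlgebra.single (mkBW [y, x] [a, b]) 1 ∈ TwoSidedIdeal.span (SHgens r) :=
      TwoSidedIdeal.subset_span (Or.inr ⟨x, y, b, a, h, by rwa [V_symm], rfl⟩)
    have := TwoSidedIdeal.add_mem _ h1 h2
    convert this using 1
    abel
  · -- V > 0 : use (xy/ab) − (yx/ab) and (xy/ba) − (yx/ba)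
    have h1 : MonoidAlgebra.single (mkBW [x, y] [a, b]) (1 : ℤ)
        - MonoidAlgebra.single (mkBW [y, x] [a, b]) 1 ∈ TwoSidedIdeal.span (SHgens r) :=
      TwoSidedIdeal.subset_span (Or.inl ⟨x, y, a, b, h, hV, rfl⟩)
    have h2 : MonoidAlgebra.single (mkBW [x, y] [b, a]) (1 : ℤ)
        - MonoidAlgebra.single (mkBW [y, x] [b, a]) 1 ∈ TwoSidedIdeal.span (SHgens r) :=
      TwoSidedIdeal.subset_span (Or.inl ⟨x, y, b, a, h, by rwa [V_symm], rfl⟩)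
    have := TwoSidedIdeal.add_mem _ h1 h2
    convert this using 1
    abel

lemma diag_mem {r : ℕ} (x y a : Fin r) (h : y < x) :
    MonoidAlgebra.single (mkBW [x, y] [a, a]) 1
      - MonoidAlgebra.single (mkBW [y, x] [a, a]) (1 : ℤ)
      ∈ TwoSidedIdeal.span (SHgens r) :=
  TwoSidedIdeal.subset_span (Or.inl ⟨x, y, a, a, h, V_diag_pos x y a, rfl⟩)

lemma SRgens_mem {r : ℕ} : ∀ E ∈ SRgens ℤ r, E ∈ TwoSidedIdeal.span (SHgens r) := by
  rintro E (⟨x, y, a, h, rfl⟩ | ⟨x, y, a, b, h, _, rfl⟩)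
  · exact diag_mem x y a h
  · exact key_mem x y a b h

/-- **Proposition 5** (the contextual algebra is a subalgebra of the 1-right
quantum algebra):  every generator of `I(SR)` lies in `I(SH)`, hence
`I(SR) ⊆ I(SH)`; in particular, for all `x>y` and all `a, b`, the element
`(xy over ab) − (yx over ba) − (yx over ab) + (xy over ba)` belongs to `I(SH)`,
and for all `x>y` and all `a` the element `(xy over aa) − (yx over aa)` belongs
to `I(SH)`. -/
theorem H_subalgebra_of_R (r : ℕ) :
    (∀ E ∈ SRgens ℤ r, E ∈ TwoSidedIdeal.span (SHgens r)) ∧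
    TwoSidedIdeal.span (SRgens ℤ r) ≤ TwoSidedIdeal.span (SHgens r) ∧
    (∀ x y a b : Fin r, y < x →
      MonoidAlgebra.single (mkBW [x, y] [a, b]) 1
        - MonoidAlgebra.single (mkBW [y, x] [b, a]) 1
        - MonoidAlgebra.single (mkBW [y, x] [a, b]) 1
        + MonoidAlgebra.single (mkBW [x, y] [b, a]) 1
        ∈ TwoSidedIdeal.span (SHgens r)) ∧
    (∀ x y a : Fin r, y < x →
      MonoidAlgebra.single (mkBW [x, y] [a, a]) 1
        - MonoidAlgebra.single (mkBW [y, x] [a, a]) 1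
        ∈ TwoSidedIdeal.span (SHgens r))  := by
  refine ⟨SRgens_mem, ?_, fun x y a b h => key_mem x y a b h, fun x y a h => diag_mem x y a h⟩
  intro z hz
  exact TwoSidedIdeal.mem_span_iff.mp hz _ fun E hE => SRgens_mem E hE
end
end

section
/- (Proposition 6.) The reduction system (SH) is not reduction-unique: with r ≥ 3, starting from the biword (321 over 213), applying (SH)-rewriting steps successively at positions (1,2), (2,3), (1,2) yields the (SH)-irreducible biword (123 over 321), whereas applying (SH)-rewriting steps successively at positions (2,3), (1,2), (2,3) yields the (SH)-irreducible biword (123 over 132); these two irreducible biwords are distinct, so a biword can have two different (SH)-normal forms. -/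
/-!
Common framework: fix a positive integer `r`; the alphabet `A = {1,…,r}` is modelled
by `Fin r` (the letter `k ∈ A` corresponding to `⟨k-1, _⟩ : Fin r`, with the same
linear order).  A biword is a word in the free monoid on biletters (columns);
`MonoidAlgebra R (Biword r)` is the corresponding large algebra restricted to
finitely supported linear combinations of biwords.
-/

open LaurentPolynomial

noncomputable section

/-- **Proposition 6**: the reduction system `(SH)` is not reduction-unique.
With letters `x₁ = 1`, `x₂ = 2`, `x₃ = 3` (0-based in `Fin r`, `3 ≤ r`),
starting from the biword `(321 over 213)`:
rewriting at positions `(1,2)`, `(2,3)`, `(1,2)` yields the `(SH)`-irreducible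
biword `(123 over 321)`, while rewriting at positions `(2,3)`, `(1,2)`, `(2,3)`
yields the `(SH)`-irreducible biword `(123 over 132)`; these two irreducible
biwords are distinct, so a biword can have two different `(SH)`-normal forms. -/
theorem SH_not_reduction_unique (r : ℕ) (hr : 3 ≤ r)
    (x₁ x₂ x₃ : Fin r) (h1 : x₁.val = 0) (h2 : x₂.val = 1) (h3 : x₃.val = 2) :
    -- first chain: (321|213) → (231|213) → (213|231) → (123|321)
    SHstepAt r 1 [(x₃,x₂),(x₂,x₁),(x₁,x₃)] [(x₂,x₂),(x₃,x₁),(x₁,x₃)] ∧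
    SHstepAt r 2 [(x₂,x₂),(x₃,x₁),(x₁,x₃)] [(x₂,x₂),(x₁,x₃),(x₃,x₁)] ∧
    SHstepAt r 1 [(x₂,x₂),(x₁,x₃),(x₃,x₁)] [(x₁,x₃),(x₂,x₂),(x₃,x₁)] ∧
    -- second chain: (321|213) → (312|213) → (132|123) → (123|132)
    SHstepAt r 2 [(x₃,x₂),(x₂,x₁),(x₁,x₃)] [(x₃,x₂),(x₁,x₁),(x₂,x₃)] ∧
    SHstepAt r 1 [(x₃,x₂),(x₁,x₁),(x₂,x₃)] [(x₁,x₁),(x₃,x₂),(x₂,x₃)] ∧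
    SHstepAt r 2 [(x₁,x₁),(x₃,x₂),(x₂,x₃)] [(x₁,x₁),(x₂,x₃),(x₃,x₂)] ∧
    -- both end biwords are (SH)-irreducible, and they are distinct
    List.Chain' (fun c d => SHrulePair r c d = none) [(x₁,x₃),(x₂,x₂),(x₃,x₁)] ∧
    List.Chain' (fun c d => SHrulePair r c d = none) [(x₁,x₁),(x₂,x₃),(x₃,x₂)] ∧
    [(x₁,x₃),(x₂,x₂),(x₃,x₁)] ≠ [(x₁,x₁),(x₂,x₃),(x₃,x₂)] := by

  have l12 : x₁ < x₂ := by rw [Fin.lt_def, h1, h2]; norm_num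
  have l13 : x₁ < x₃ := by rw [Fin.lt_def, h1, h3]; norm_num
  have l23 : x₂ < x₃ := by rw [Fin.lt_def, h2, h3]; norm_num
  have n21 : ¬ x₂ < x₁ := not_lt.2 l12.le
  have n31 : ¬ x₃ < x₁ := not_lt.2 l13.le
  have n32 : ¬ x₃ < x₂ := not_lt.2 l23.le
  -- rule evaluations
  have rule32 : SHrulePair r (x₃,x₂) (x₂,x₁) = some ((x₂,x₂),(x₃,x₁)) := by
    have hV : (0:ℚ) < V x₃ x₂ x₂ x₁ := by norm_num [V, h1, h2, h3]
    simp [SHrulePair, l23, hV]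
  have rule31 : SHrulePair r (x₃,x₁) (x₁,x₃) = some ((x₁,x₃),(x₃,x₁)) := by
    have hV : ¬ (0:ℚ) < V x₃ x₁ x₁ x₃ := by norm_num [V, h1, h3]
    simp [SHrulePair, l13, hV]
  have rule21 : SHrulePair r (x₂,x₂) (x₁,x₃) = some ((x₁,x₃),(x₂,x₂)) := by
    have hV : ¬ (0:ℚ) < V x₂ x₁ x₂ x₃ := by norm_num [V, h1, h2, h3]
    simp [SHrulePair, l12, hV]
  have rule21' : SHrulePair r (x₂,x₁) (x₁,x₃) = some ((x₁,x₁),(x₂,x₃)) := by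
    have hV : (0:ℚ) < V x₂ x₁ x₁ x₃ := by norm_num [V, h1, h2, h3]
    simp [SHrulePair, l12, hV]
  have rule32' : SHrulePair r (x₃,x₂) (x₁,x₁) = some ((x₁,x₁),(x₃,x₂)) := by
    have hV : ¬ (0:ℚ) < V x₃ x₁ x₂ x₁ := by norm_num [V, h1, h2, h3]
    simp [SHrulePair, l13, hV]
  have rule32'' : SHrulePair r (x₃,x₂) (x₂,x₃) = some ((x₂,x₃),(x₃,x₂)) := by
    have hV : ¬ (0:ℚ) < V x₃ x₂ x₂ x₃ := by norm_num [V, h2, h3]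
    simp [SHrulePair, l23, hV]
  -- irreducibility facts
  have i13_22 : SHrulePair r (x₁,x₃) (x₂,x₂) = none := by simp [SHrulePair, n21]
  have i22_31 : SHrulePair r (x₂,x₂) (x₃,x₁) = none := by simp [SHrulePair, n32]
  have i11_23 : SHrulePair r (x₁,x₁) (x₂,x₃) = none := by simp [SHrulePair, n21]
  have i23_32 : SHrulePair r (x₂,x₃) (x₃,x₂) = none := by simp [SHrulePair, n32]
  refine ⟨⟨[], (x₃,x₂), (x₂,x₁), (x₂,x₂), (x₃,x₁), [(x₁,x₃)], rfl, rule32, rfl, rfl⟩,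
    ⟨[(x₂,x₂)], (x₃,x₁), (x₁,x₃), (x₁,x₃), (x₃,x₁), [], rfl, rule31, rfl, rfl⟩,
    ⟨[], (x₂,x₂), (x₁,x₃), (x₁,x₃), (x₂,x₂), [(x₃,x₁)], rfl, rule21, rfl, rfl⟩,
    ⟨[(x₃,x₂)], (x₂,x₁), (x₁,x₃), (x₁,x₁), (x₂,x₃), [], rfl, rule21', rfl, rfl⟩,
    ⟨[], (x₃,x₂), (x₁,x₁), (x₁,x₁), (x₃,x₂), [(x₂,x₃)], rfl, rule32', rfl, rfl⟩,
    ⟨[(x₁,x₁)], (x₃,x₂), (x₂,x₃), (x₂,x₃), (x₃,x₂), [], rfl, rule32'', rfl, rfl⟩,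
    ?_, ?_, ?_⟩
  · exact List.IsChain.cons_cons i13_22 (List.isChain_pair.2 i22_31)
  · exact List.IsChain.cons_cons i11_23 (List.isChain_pair.2 i23_32)
  · intro h
    simp only [List.cons.injEq, Prod.mk.injEq] at h
    have h13 : x₃ = x₁ := h.1.2
    have := congrArg Fin.val h13
    rw [h3, h1] at this
    exact absurd this (by norm_num)
end
end
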